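/- arXiv:1501.01751 — 4 statements merged into one kernel-verified Lean document; each statement's English description precedes it below -/
import Mathlib

section
/- Let X be an irreducible sofic shift and π: X → Y a finite-to-one factor code. Then a shift-invariant Borel probability measure μ on X has full topological support (supp(μ) = X) if and only if its pushforward πμ has full topological support in Y. -/
open MeasureTheory Set Filter Topology
open scoped ENNReal NNReal

/-- The shift map on the full shift `A^ℤ`. -/
def shiftMap {A : Type*} : (ℤ → A) → ℤ → A := fun x i => x (i + 1)

/-- The inverse shift map. -/
def shiftInvMap {A : Type*} : (ℤ → A) → ℤ → A := fun x i => x (i - 1)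

/-- The coordinatewise shift on `n`-tuples of points of the full shift. -/
def prodShift {A : Type*} {n : ℕ} : (Fin n → ℤ → A) → Fin n → ℤ → A :=
  fun x i => shiftMap (x i)

/-- A map between full shifts is a sliding block code if it is given by a local block map. -/
def IsSlidingBlockCode {A B : Type*} (π : (ℤ → A) → ℤ → B) : Prop :=
  ∃ (r : ℕ) (Φ : (Fin (2 * r + 1) → A) → B),
    ∀ x i, π x i = Φ fun j => x (i + (j : ℤ) - (r : ℤ))

/-- A subset of the full shift is a shift of finite type if it is the set of points
avoiding a (finite) set of forbidden words of some fixed length `N` (and is nonempty). -/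
def IsSFT {A : Type*} (X : Set (ℤ → A)) : Prop :=
  X.Nonempty ∧ ∃ (N : ℕ) (F : Set (Fin N → A)),
    X = {x | ∀ k : ℤ, (fun i : Fin N => x (k + (i : ℤ))) ∉ F}

/-- A sofic shift: the image of an SFT under a sliding block code. -/
def IsSofic {A : Type*} (X : Set (ℤ → A)) : Prop :=
  ∃ (m : ℕ) (Z : Set (ℤ → Fin m)) (φ : (ℤ → Fin m) → ℤ → A),
    IsSFT Z ∧ IsSlidingBlockCode φ ∧ φ '' Z = X

/-- A word occurs in the shift space `X`. -/
def WordIn {A : Type*} (X : Set (ℤ → A)) {n : ℕ} (w : Fin n → A) : Prop :=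
  ∃ x ∈ X, ∃ k : ℤ, ∀ i : Fin n, x (k + (i : ℤ)) = w i

/-- Irreducibility: any two words occurring in `X` can be seen in a single point of `X`,
with the first strictly to the left of the second (equivalently, `u w v` occurs in `X`). -/
def IsIrreducibleShift {A : Type*} (X : Set (ℤ → A)) : Prop :=
  ∀ {m n : ℕ} (u : Fin m → A) (v : Fin n → A), WordIn X u → WordIn X v →
    ∃ x ∈ X, ∃ i j : ℤ, i + (m : ℤ) ≤ j ∧ (∀ a : Fin m, x (i + (a : ℤ)) = u a) ∧
      ∀ b : Fin n, x (j + (b : ℤ)) = v b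

/-- `π` is a factor code from `X` onto `Y`: a sliding block code mapping `X` onto `Y`. -/
def IsFactorCodeOn {A B : Type*} (π : (ℤ → A) → ℤ → B) (X : Set (ℤ → A))
    (Y : Set (ℤ → B)) : Prop :=
  IsSlidingBlockCode π ∧ π '' X = Y

/-- A point of `Y` is doubly transitive if its forward and backward orbits are dense in `Y`. -/
def DoublyTransitiveIn {B : Type*} [TopologicalSpace B] (Y : Set (ℤ → B)) (y : ℤ → B) : Prop :=
  y ∈ Y ∧ Y ⊆ closure {z | ∃ n : ℕ, z = shiftMap^[n] y} ∧
    Y ⊆ closure {z | ∃ n : ℕ, z = shiftInvMap^[n] y}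

/-- The measure `μ` has full topological support on the shift space `X`:
every open set meeting `X` has positive measure. -/
def FullSupportOn {A : Type*} [TopologicalSpace A] [MeasurableSpace A]
    (μ : Measure (ℤ → A)) (X : Set (ℤ → A)) : Prop :=
  ∀ U : Set (ℤ → A), IsOpen U → (U ∩ X).Nonempty → 0 < μ U

/-- An `n`-fold `π`-relative joining supported on tuples from `X` with equal `π`-images. -/
def IsRelJoining {A B : Type*} [MeasurableSpace A] (X : Set (ℤ → A))
    (π : (ℤ → A) → ℤ → B) {n : ℕ} (lam : Measure (Fin n → ℤ → A)) : Prop :=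
  IsProbabilityMeasure lam ∧ MeasurePreserving prodShift lam lam ∧
    lam {x | (∀ i, x i ∈ X) ∧ ∀ i j, π (x i) = π (x j)} = 1

/-- A relative joining over `ν`: all the `π`-images of the marginals are `ν`. -/
def IsRelJoiningOver {A B : Type*} [MeasurableSpace A] [MeasurableSpace B]
    (X : Set (ℤ → A)) (π : (ℤ → A) → ℤ → B) (ν : Measure (ℤ → B)) {n : ℕ}
    (lam : Measure (Fin n → ℤ → A)) : Prop :=
  IsRelJoining X π lam ∧ ∀ i : Fin n, lam.map (fun x => π (x i)) = ν

/-- A relative joining is separating if a.e. tuple has pairwise distinct coordinates. -/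
def IsSeparating {A : Type*} [MeasurableSpace A] {n : ℕ}
    (lam : Measure (Fin n → ℤ → A)) : Prop :=
  lam {x | ∀ i j : Fin n, i ≠ j → x i ≠ x j} = 1

/-- A degree joining over `ν`: an ergodic `d`-fold separating relative joining over `ν`. -/
def IsDegreeJoining {A B : Type*} [MeasurableSpace A] [MeasurableSpace B]
    (X : Set (ℤ → A)) (π : (ℤ → A) → ℤ → B) (ν : Measure (ℤ → B)) (d : ℕ)
    (lam : Measure (Fin d → ℤ → A)) : Prop :=
  Ergodic prodShift lam ∧ IsRelJoiningOver X π ν lam ∧ IsSeparating lam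

/-- `x` is a generic point for the invariant measure `μ`: ergodic averages of every
continuous function converge to the integral. -/
def GenericFor {A : Type*} [TopologicalSpace A] [MeasurableSpace A] (x : ℤ → A)
    (μ : Measure (ℤ → A)) : Prop :=
  ∀ f : C(ℤ → A, ℝ),
    Tendsto (fun n : ℕ => (∑ k ∈ Finset.range n, f (shiftMap^[k] x)) / (n : ℝ))
      atTop (𝓝 (∫ z, f z ∂μ))

namespace SBC

def appB {α β : Type*} (r : ℕ) (Φ : (Fin (2*r+1) → α) → β) (x : ℤ → α) : ℤ → β :=
  fun i => Φ fun j => x (i + (j:ℤ) - (r:ℤ))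

def Pres {α : Type*} (x : ℤ → α) (k : ℤ) {n : ℕ} (w : Fin n → α) : Prop :=
  ∀ i : Fin n, x (k + (i:ℤ)) = w i

def shiftBy {α : Type*} (t : ℤ) (x : ℤ → α) : ℤ → α := fun i => x (i + t)

def ZIn {γ : Type*} {N : ℕ} (F : Set (Fin N → γ)) (z : ℤ → γ) : Prop :=
  ∀ k : ℤ, (fun i : Fin N => z (k + (i:ℤ))) ∉ F

def blockAt {γ : Type*} (M : ℕ) (z : ℤ → γ) (p : ℤ) : Fin M → γ := fun i => z (p + (i:ℤ))

section basic
variable {α β γ : Type*} {N : ℕ} {F : Set (Fin N → γ)}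

lemma ZIn.shiftBy (t : ℤ) {z : ℤ → γ} (h : ZIn F z) : ZIn F (SBC.shiftBy t z) := by
  intro k hk
  exact h (k + t) (by convert hk using 2 with i; simp [SBC.shiftBy]; ring_nf)

lemma Pres.shiftBy {x : ℤ → α} {k t : ℤ} {n : ℕ} {w : Fin n → α}
    (h : Pres x (k + t) w) : Pres (SBC.shiftBy t x) k w := by
  intro i; simpa [SBC.shiftBy, add_right_comm] using h i

lemma ZIn.glue {z₁ z₂ : ℤ → γ} (h₁ : ZIn F z₁) (h₂ : ZIn F z₂) {c : ℤ} {M : ℕ}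
    (hM : N ≤ M + 1) (hagree : ∀ i : ℤ, c ≤ i → i < c + M → z₁ i = z₂ i) :
    ZIn F (fun i => if i < c then z₁ i else z₂ i) := by
  intro k hk
  by_cases h : c ≤ k
  · refine h₂ k ?_
    convert hk using 2 with i
    show z₂ (k + (i:ℤ)) = if k + (i:ℤ) < c then z₁ (k + (i:ℤ)) else z₂ (k + (i:ℤ))
    rw [if_neg (by have h0 : (0:ℤ) ≤ (i:ℤ) := Int.natCast_nonneg _; omega)]
  · refine h₁ k ?_
    convert hk using 2 with i
    show z₁ (k + (i:ℤ)) = if k + (i:ℤ) < c then z₁ (k + (i:ℤ)) else z₂ (k + (i:ℤ))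
    by_cases hic : k + (i:ℤ) < c
    · rw [if_pos hic]
    · rw [if_neg hic]
      have h1 : ((i:ℕ):ℤ) < (N:ℤ) := by exact_mod_cast i.2
      have h2 : (N:ℤ) ≤ (M:ℤ) + 1 := by exact_mod_cast hM
      exact hagree _ (by omega) (by omega)

lemma appB_congr {r : ℕ} {Φ : (Fin (2*r+1) → α) → β} {x₁ x₂ : ℤ → α} {i : ℤ}
    (h : ∀ j : ℤ, i - r ≤ j → j ≤ i + r → x₁ j = x₂ j) :
    appB r Φ x₁ i = appB r Φ x₂ i := by
  unfold appB
  congr 1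
  funext j
  have hj : ((j:ℕ):ℤ) ≤ 2*r := by exact_mod_cast Nat.lt_succ_iff.mp j.2
  have hj0 : (0:ℤ) ≤ ((j:ℕ):ℤ) := Int.natCast_nonneg _
  exact h _ (by push_cast; omega) (by push_cast; omega)

lemma appB_shiftBy {r : ℕ} {Φ : (Fin (2*r+1) → α) → β} (t : ℤ) (x : ℤ → α) :
    appB r Φ (SBC.shiftBy t x) = SBC.shiftBy t (appB r Φ x) := by
  funext i
  show Φ _ = Φ _
  congr 1
  funext j
  show x (i + (j:ℤ) - r + t) = x (i + t + (j:ℤ) - r)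
  congr 1
  ring

lemma eq_on_of_blockAt_eq {M : ℕ} {z z' : ℤ → γ} {p : ℤ}
    (h : blockAt M z p = blockAt M z' p) :
    ∀ i : ℤ, p ≤ i → i < p + M → z i = z' i := by
  intro i h1 h2
  have h3 := congrFun h ⟨(i - p).toNat, by omega⟩
  simp only [blockAt] at h3
  rwa [show p + (((i-p).toNat : ℕ) : ℤ) = i by omega] at h3

end basic

section cover
variable {A : Type*} {m N : ℕ} {F : Set (Fin N → Fin m)}
  {rf : ℕ} {Φf : (Fin (2*rf+1) → Fin m) → A} {M : ℕ}

variable (F Φf M) in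
def RsetA {n : ℕ} (u : Fin n → A) : Set (Fin M → Fin m) :=
  {a | ∃ z k, ZIn F z ∧ Pres (appB rf Φf z) k u ∧ blockAt M z (k + (n:ℤ) + (rf:ℤ)) = a}

variable (F Φf M) in
def LsetA {n : ℕ} (v : Fin n → A) : Set (Fin M → Fin m) :=
  {b | ∃ z k, ZIn F z ∧ Pres (appB rf Φf z) k v ∧ blockAt M z (k - (rf:ℤ) - (M:ℤ)) = b}

variable (F Φf) in
def ChainW {n₁ n₂ : ℕ} (u : Fin n₁ → A) (v : Fin n₂ → A) (e : ℕ) : Prop :=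
  ∃ z k, ZIn F z ∧ Pres (appB rf Φf z) k u ∧ Pres (appB rf Φf z) (k + (n₁:ℤ) + (e:ℤ)) v

lemma chain_left (hM : N ≤ M + 1) {n₁ n₁' n₂ : ℕ} {u : Fin n₁ → A} {u' : Fin n₁' → A}
    {v : Fin n₂ → A} {e : ℕ} (he : 2*rf ≤ e)
    (hR : RsetA F Φf M u' = RsetA F Φf M u) (hch : ChainW F Φf u' v e) :
    ChainW F Φf u v e := by
  obtain ⟨z, k, hz, hu', hv⟩ := hch
  have ha : blockAt M z (k + (n₁':ℤ) + rf) ∈ RsetA F Φf M u' := ⟨z, k, hz, hu', rfl⟩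
  rw [hR] at ha
  obtain ⟨z₁, k₁, hz₁, hu, hba⟩ := ha
  set p₁ : ℤ := k₁ + n₁ + rf with hp₁
  set s₀ : ℤ := k + n₁' + rf with hs₀
  set t : ℤ := s₀ - p₁ with ht
  have hz' : ZIn F (shiftBy t z) := hz.shiftBy t
  have hblk : blockAt M z₁ p₁ = blockAt M (shiftBy t z) p₁ := by
    rw [hba]
    funext j
    show z (s₀ + (j:ℤ)) = z (p₁ + (j:ℤ) + t)
    congr 1; omega
  have hagree := eq_on_of_blockAt_eq hblk
  have hvz' : Pres (appB rf Φf (shiftBy t z)) (k₁ + (n₁:ℤ) + (e:ℤ)) v := by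
    rw [appB_shiftBy]
    refine Pres.shiftBy ?_
    rw [show k₁ + (n₁:ℤ) + (e:ℤ) + t = k + (n₁':ℤ) + (e:ℤ) by omega]
    exact hv
  refine ⟨fun i => if i < p₁ then z₁ i else shiftBy t z i, k₁, hz₁.glue hz' hM hagree, ?_, ?_⟩
  · intro i
    rw [← hu i]
    refine appB_congr (fun j hj1 hj2 => ?_)
    have hi : ((i:ℕ):ℤ) < (n₁:ℤ) := by exact_mod_cast i.2
    rw [if_pos (by omega)]
  · intro i
    rw [← hvz' i]
    refine appB_congr (fun j hj1 hj2 => ?_)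
    have hi : (0:ℤ) ≤ ((i:ℕ):ℤ) := Int.natCast_nonneg _
    have he' : (2*rf:ℤ) ≤ (e:ℤ) := by exact_mod_cast he
    by_cases hc : j < p₁
    · push_cast at he'
      exact absurd hj1 (by omega)
    · rw [if_neg hc]

lemma chain_right (hM : N ≤ M + 1) {n₁ n₂ n₂' : ℕ} {u : Fin n₁ → A} {v : Fin n₂ → A}
    {v' : Fin n₂' → A} {e : ℕ} (he : 2*rf ≤ e)
    (hL : LsetA F Φf M v' = LsetA F Φf M v) (hch : ChainW F Φf u v' e) :
    ChainW F Φf u v e := by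
  obtain ⟨z, k, hz, hu, hv'⟩ := hch
  set j₀ : ℤ := k + n₁ + e with hj₀
  have hb : blockAt M z (j₀ - (rf:ℤ) - (M:ℤ)) ∈ LsetA F Φf M v' := ⟨z, j₀, hz, hv', rfl⟩
  rw [hL] at hb
  obtain ⟨z₂, k₂, hz₂, hvz₂, hbb⟩ := hb
  set t : ℤ := k₂ - j₀ with htdef
  have hz₂' : ZIn F (shiftBy t z₂) := hz₂.shiftBy t
  have hvz₂' : Pres (appB rf Φf (shiftBy t z₂)) j₀ v := by
    rw [appB_shiftBy]
    refine Pres.shiftBy ?_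
    rw [show j₀ + t = k₂ by omega]
    exact hvz₂
  set c : ℤ := j₀ - rf - M with hcdef
  have hblk : blockAt M z c = blockAt M (shiftBy t z₂) c := by
    rw [← hbb]
    funext j
    show z₂ (k₂ - rf - M + (j:ℤ)) = z₂ (c + (j:ℤ) + t)
    congr 1; omega
  have hagree := eq_on_of_blockAt_eq hblk
  refine ⟨fun i => if i < c then z i else shiftBy t z₂ i, k, hz.glue hz₂' hM hagree, ?_, ?_⟩
  · intro i
    rw [← hu i]
    refine appB_congr (fun j hj1 hj2 => ?_)
    have hi : ((i:ℕ):ℤ) < (n₁:ℤ) := by exact_mod_cast i.2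
    have he' : (2*rf:ℤ) ≤ (e:ℤ) := by exact_mod_cast he
    by_cases hc : j < c
    · rw [if_pos hc]
    · rw [if_neg hc]
      exact (hagree j (by omega) (by omega)).symm
  · intro i
    rw [← hvz₂' i]
    refine appB_congr (fun j hj1 hj2 => ?_)
    have hi : (0:ℤ) ≤ ((i:ℕ):ℤ) := Int.natCast_nonneg _
    rw [if_neg (by omega)]

lemma wordIn_ex {X : Set (ℤ → A)} (hX : appB rf Φf '' {z | ZIn F z} = X)
    {n : ℕ} {u : Fin n → A} (hu : ∃ x ∈ X, ∃ k : ℤ, ∀ i : Fin n, x (k + (i:ℤ)) = u i) :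
    ∃ z k, ZIn F z ∧ Pres (appB rf Φf z) k u := by
  obtain ⟨x, hx, k, hk⟩ := hu
  rw [← hX] at hx
  obtain ⟨z, hz, rfl⟩ := hx
  exact ⟨z, k, hz, hk⟩

lemma chain_exists_ge {X : Set (ℤ → A)} (hX : appB rf Φf '' {z | ZIn F z} = X)
    (hirr : ∀ {m n : ℕ} (u : Fin m → A) (v : Fin n → A),
      (∃ x ∈ X, ∃ k : ℤ, ∀ i : Fin m, x (k + (i:ℤ)) = u i) →
      (∃ x ∈ X, ∃ k : ℤ, ∀ i : Fin n, x (k + (i:ℤ)) = v i) →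
      ∃ x ∈ X, ∃ i j : ℤ, i + (m:ℤ) ≤ j ∧ (∀ a : Fin m, x (i + (a:ℤ)) = u a) ∧
        ∀ b : Fin n, x (j + (b:ℤ)) = v b)
    {n₁ n₂ : ℕ} {u : Fin n₁ → A} {v : Fin n₂ → A}
    (hu : ∃ x ∈ X, ∃ k : ℤ, ∀ i : Fin n₁, x (k + (i:ℤ)) = u i)
    (hv : ∃ x ∈ X, ∃ k : ℤ, ∀ i : Fin n₂, x (k + (i:ℤ)) = v i)
    (P : ℕ) : ∃ e : ℕ, P ≤ e ∧ ChainW F Φf u v e := by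
  obtain ⟨x, hx, k, hk⟩ := hu
  have huplus : ∃ x' ∈ X, ∃ k' : ℤ, ∀ i : Fin (n₁ + P), x' (k' + (i:ℤ)) = x (k + (i:ℤ)) :=
    ⟨x, hx, k, fun i => rfl⟩
  obtain ⟨x', hx', i', j', hij, hu2, hv2⟩ := hirr (fun i : Fin (n₁+P) => x (k + (i:ℤ))) v huplus hv
  obtain ⟨z, hz, hphz⟩ := (by rw [← hX] at hx'; exact hx' : x' ∈ appB rf Φf '' {z | ZIn F z})
  refine ⟨(j' - i' - n₁).toNat, by push_cast at hij ⊢; omega, z, i', hz, ?_, ?_⟩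
  · intro t
    have h1 := hu2 ⟨(t:ℕ), by omega⟩
    have h2 := hk ⟨(t:ℕ), by have := t.2; omega⟩
    simp only [Fin.val_mk] at h1 h2
    rw [hphz, h1, h2]
  · intro t
    rw [hphz]
    rw [show i' + (n₁:ℤ) + (((j' - i' - (n₁:ℤ)).toNat : ℕ):ℤ) + (t:ℤ) = j' + (t:ℤ) by
      push_cast at hij ⊢; omega]
    exact hv2 t

lemma uniform_irr (hM : N ≤ M + 1) {X : Set (ℤ → A)}
    (hX : appB rf Φf '' {z | ZIn F z} = X)
    (hirr : ∀ {m n : ℕ} (u : Fin m → A) (v : Fin n → A),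
      (∃ x ∈ X, ∃ k : ℤ, ∀ i : Fin m, x (k + (i:ℤ)) = u i) →
      (∃ x ∈ X, ∃ k : ℤ, ∀ i : Fin n, x (k + (i:ℤ)) = v i) →
      ∃ x ∈ X, ∃ i j : ℤ, i + (m:ℤ) ≤ j ∧ (∀ a : Fin m, x (i + (a:ℤ)) = u a) ∧
        ∀ b : Fin n, x (j + (b:ℤ)) = v b) :
    ∃ g : ℕ, ∀ {n₁ n₂ : ℕ} (u : Fin n₁ → A) (v : Fin n₂ → A),
      (∃ x ∈ X, ∃ k : ℤ, ∀ i : Fin n₁, x (k + (i:ℤ)) = u i) →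
      (∃ x ∈ X, ∃ k : ℤ, ∀ i : Fin n₂, x (k + (i:ℤ)) = v i) →
      ∃ e : ℕ, e ≤ g ∧ ChainW F Φf u v e := by
  classical
  set γt := Set (Fin M → Fin m) × Set (Fin M → Fin m)
  set Q : γt → ℕ → Prop := fun c e => 2*rf ≤ e ∧ ∃ (n₁ n₂ : ℕ) (u : Fin n₁ → A)
    (v : Fin n₂ → A), RsetA F Φf M u = c.1 ∧ LsetA F Φf M v = c.2 ∧ ChainW F Φf u v e
    with hQdef
  set E : γt → ℕ := fun c => if h : ∃ e, Q c e then h.choose else 0 with hEdef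
  have hE : ∀ c, (∃ e, Q c e) → Q c (E c) := by
    intro c h
    simp only [hEdef, dif_pos h]
    exact h.choose_spec
  obtain ⟨g, hg⟩ := (Set.finite_range E).bddAbove
  refine ⟨g, fun {n₁ n₂} u v hu hv => ?_⟩
  obtain ⟨e₀, he₀, hch₀⟩ := chain_exists_ge hX @hirr hu hv (2*rf)
  have hQex : ∃ e, Q (RsetA F Φf M u, LsetA F Φf M v) e :=
    ⟨e₀, he₀, n₁, n₂, u, v, rfl, rfl, hch₀⟩
  obtain ⟨he2, n₁', n₂', u₀, v₀, hR, hL, hch⟩ := hE _ hQex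
  refine ⟨E (RsetA F Φf M u, LsetA F Φf M v), hg (Set.mem_range_self _), ?_⟩
  exact chain_right hM he2 hL (chain_left hM he2 hR hch)

variable (F Φf M) in
def TsetW {l : ℕ} (w : Fin l → A) : Set ((Fin M → Fin m) × (Fin M → Fin m)) :=
  {p | ∃ z k, ZIn F z ∧ Pres (appB rf Φf z) k w ∧ blockAt M z k = p.1 ∧
    blockAt M z (k + (l:ℤ) - (M:ℤ)) = p.2}

lemma swap_lemma (hM : N ≤ M + 1) (hM2 : 2*rf ≤ M) {R : ℕ} (hRrf : rf ≤ R)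
    (hRM : M ≤ R + rf) {l : ℕ} (hlM : M ≤ l) {w w' : Fin l → A}
    {z : ℤ → Fin m} {q : ℤ} (hz : ZIn F z) (hq : Pres (appB rf Φf z) q w)
    (hmL : ∀ i : Fin l, (i:ℕ) < R → w i = w' i)
    (hmR : ∀ i : Fin l, l - R ≤ (i:ℕ) → w i = w' i)
    (hT : TsetW F Φf M w ⊆ TsetW F Φf M w') :
    ∃ zOut, ZIn F zOut ∧ Pres (appB rf Φf zOut) q w' ∧
      ∀ i : ℤ, (i < q ∨ q + (l:ℤ) ≤ i) → appB rf Φf zOut i = appB rf Φf z i := by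
  have hmem : (blockAt M z q, blockAt M z (q + (l:ℤ) - (M:ℤ))) ∈ TsetW F Φf M w :=
    ⟨z, q, hz, hq, rfl, rfl⟩
  obtain ⟨z'', k'', hz'', hw'', hb1, hb2⟩ := hT hmem
  dsimp only at hb1 hb2
  set t : ℤ := k'' - q with htdef
  set z' := shiftBy t z'' with hz'def
  have hz' : ZIn F z' := hz''.shiftBy t
  have hw' : Pres (appB rf Φf z') q w' := by
    rw [hz'def, appB_shiftBy]
    refine Pres.shiftBy ?_
    rw [show q + t = k'' by omega]
    exact hw''
  have hb1' : blockAt M z q = blockAt M z' q := by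
    rw [← hb1]; funext j
    show z'' (k'' + (j:ℤ)) = z'' (q + (j:ℤ) + t)
    congr 1; omega
  have hb2' : blockAt M z (q + (l:ℤ) - (M:ℤ)) = blockAt M z' (q + (l:ℤ) - (M:ℤ)) := by
    rw [← hb2]; funext j
    show z'' (k'' + (l:ℤ) - (M:ℤ) + (j:ℤ)) = z'' (q + (l:ℤ) - (M:ℤ) + (j:ℤ) + t)
    congr 1; omega
  have hagree1 := eq_on_of_blockAt_eq hb1'
  have hagree2 := eq_on_of_blockAt_eq hb2'
  set c : ℤ := q + (l:ℤ) - (M:ℤ) with hcdef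
  set inner : ℤ → Fin m := fun i => if i < q then z i else z' i with hinner
  have hinnerZ : ZIn F inner := hz.glue hz' hM hagree1
  set zh : ℤ → Fin m := fun i => if i < c then inner i else z i with hzh
  have hzhZ : ZIn F zh := by
    refine hinnerZ.glue hz hM (fun i h1 h2 => ?_)
    have : ¬ i < q := by omega
    show (if i < q then z i else z' i) = z i
    rw [if_neg this]
    exact (hagree2 i (by omega) (by omega)).symm
  -- region facts
  have F2 : ∀ i : ℤ, q ≤ i → i < q + l → zh i = z' i := by
    intro i h1 h2
    show (if i < c then inner i else z i) = z' i
    by_cases hc : i < c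
    · rw [if_pos hc]; show (if i < q then z i else z' i) = z' i; rw [if_neg (by omega)]
    · rw [if_neg hc]; exact hagree2 i (by omega) (by omega)
  have F4 : ∀ i : ℤ, i < q + M → zh i = z i := by
    intro i h1
    show (if i < c then inner i else z i) = z i
    by_cases hc : i < c
    · rw [if_pos hc]
      show (if i < q then z i else z' i) = z i
      by_cases hq' : i < q
      · rw [if_pos hq']
      · rw [if_neg hq']; exact (hagree1 i (by omega) (by omega)).symm
    · rw [if_neg hc]
  have F3 : ∀ i : ℤ, c ≤ i → zh i = z i := by
    intro i h1
    show (if i < c then inner i else z i) = z i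
    rw [if_neg (by omega)]
  -- φ facts
  have key2 : ∀ i : ℤ, q + rf ≤ i → i + rf < q + l → appB rf Φf zh i = appB rf Φf z' i :=
    fun i h1 h2 => appB_congr (fun j hj1 hj2 => F2 j (by omega) (by omega))
  have keyL : ∀ i : ℤ, i + rf < q + M → appB rf Φf zh i = appB rf Φf z i :=
    fun i h1 => appB_congr (fun j hj1 hj2 => F4 j (by omega))
  have keyR : ∀ i : ℤ, c + rf ≤ i → appB rf Φf zh i = appB rf Φf z i :=
    fun i h1 => appB_congr (fun j hj1 hj2 => F3 j (by omega))
  refine ⟨zh, hzhZ, ?_, ?_⟩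
  · intro i
    have hi : ((i:ℕ):ℤ) < (l:ℤ) := by exact_mod_cast i.2
    have hi0 : (0:ℤ) ≤ ((i:ℕ):ℤ) := Int.natCast_nonneg _
    by_cases c1 : ((i:ℕ):ℤ) + rf < M
    · rw [keyL (q + (i:ℤ)) (by omega), hq i]
      exact hmL i (by exact_mod_cast (by omega : ((i:ℕ):ℤ) < (R:ℤ)))
    · by_cases c2 : ((i:ℕ):ℤ) + rf < l
      · rw [key2 (q + (i:ℤ)) (by omega) (by omega)]
        exact hw' i
      · rw [keyR (q + (i:ℤ)) (by omega), hq i]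
        exact hmR i (by
          have : (l:ℤ) - R ≤ ((i:ℕ):ℤ) := by omega
          omega)
  · intro i hi
    rcases hi with hi | hi
    · exact keyL i (by omega)
    · exact keyR i (by omega)

end cover

section pic
variable {A B : Type*} {rp : ℕ} {Φp : (Fin (2*rp+1) → A) → B}

variable (Φp) in
def BimgW {l : ℕ} (w : Fin l → A) : Fin (l - 2*rp) → B :=
  fun t => Φp fun j => w ⟨(t:ℕ) + (j:ℕ), by have := t.2; have := j.2; omega⟩

lemma pres_Bimg {x : ℤ → A} {k : ℤ} {l : ℕ} {w : Fin l → A} (hw : Pres x k w)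
    (t : Fin (l - 2*rp)) :
    appB rp Φp x (k + (rp:ℤ) + ((t:ℕ):ℤ)) = BimgW Φp w t := by
  unfold appB BimgW
  congr 1
  funext j
  have hb : (t:ℕ) + (j:ℕ) < l := by have := t.2; have := j.2; omega
  have := hw ⟨(t:ℕ) + (j:ℕ), hb⟩
  simp only [Fin.val_mk] at this
  rw [show k + (rp:ℤ) + ((t:ℕ):ℤ) + ((j:ℕ):ℤ) - (rp:ℤ) = k + (((t:ℕ) + (j:ℕ) : ℕ):ℤ) by
    push_cast; ring]
  exact this

lemma pi_eq_of_swap {x x' : ℤ → A} {q : ℤ} {l R : ℕ} {w w' : Fin l → A}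
    (hRrp : 2*rp ≤ R)
    (hout : ∀ i : ℤ, (i < q ∨ q + (l:ℤ) ≤ i) → x' i = x i)
    (hw : Pres x q w) (hw' : Pres x' q w')
    (hmL : ∀ i : Fin l, (i:ℕ) < R → w i = w' i)
    (hmR : ∀ i : Fin l, l - R ≤ (i:ℕ) → w i = w' i)
    (hB : BimgW Φp w = BimgW Φp w') :
    appB rp Φp x' = appB rp Φp x := by
  funext i
  by_cases hcase : (i + rp < q + R) ∨ (q + (l:ℤ) - R ≤ i - rp)
  · refine appB_congr (fun j hj1 hj2 => ?_)
    by_cases hj : j < q ∨ q + (l:ℤ) ≤ j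
    · exact hout j hj
    · push_neg at hj
      have hjl : ((j - q).toNat : ℤ) = j - q := Int.toNat_of_nonneg (by omega)
      set tt : Fin l := ⟨(j - q).toNat, by omega⟩ with htt
      have h1 : x' j = w' tt := by
        have := hw' tt
        rwa [show q + ((tt:ℕ):ℤ) = j by simp only [htt]; omega] at this
      have h2 : x j = w tt := by
        have := hw tt
        rwa [show q + ((tt:ℕ):ℤ) = j by simp only [htt]; omega] at this
      rw [h1, h2]
      refine (?_ : w tt = w' tt).symm
      rcases hcase with hc | hc
      · exact hmL tt (by simp only [htt]; omega)
      · refine hmR tt ?_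
        have : (l:ℤ) - R ≤ ((tt:ℕ):ℤ) := by simp only [htt]; push_cast; omega
        omega
  · push_neg at hcase
    obtain ⟨hc1, hc2⟩ := hcase
    have h2rp : ((2*rp:ℕ):ℤ) ≤ (R:ℤ) := by exact_mod_cast hRrp
    push_cast at h2rp
    have hbt : i - q - rp ≥ 0 := by omega
    have hbt2 : i - q - rp < (l:ℤ) - 2*rp := by omega
    set t0 : Fin (l - 2*rp) := ⟨(i - q - rp).toNat, by omega⟩ with ht0
    have ht0v : ((t0:ℕ):ℤ) = i - q - rp := by
      simp only [ht0]; exact Int.toNat_of_nonneg hbt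
    have e1 := pres_Bimg (Φp := Φp) hw t0
    have e2 := pres_Bimg (Φp := Φp) hw' t0
    rw [show q + (rp:ℤ) + ((t0:ℕ):ℤ) = i by omega] at e1 e2
    rw [e1, e2, hB]

end pic

section topo
variable {α β : Type*} [TopologicalSpace α] [DiscreteTopology α] [TopologicalSpace β]

lemma appB_continuous (r : ℕ) (Φ : (Fin (2*r+1) → α) → β) :
    Continuous (appB r Φ) :=
  continuous_pi fun _ =>
    continuous_of_discreteTopology.comp (continuous_pi fun _ => continuous_apply _)

end topo

section xtop
variable {A : Type*} [TopologicalSpace A] [DiscreteTopology A] [Finite A]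
  {m N : ℕ} {F : Set (Fin N → Fin m)}
  {rf : ℕ} {Φf : (Fin (2*rf+1) → Fin m) → A}

lemma ximg_compact : IsCompact (appB rf Φf '' {z | ZIn F z}) ∧
    IsClosed (appB rf Φf '' {z | ZIn F z}) := by
  letI : TopologicalSpace (Fin m) := ⊥
  haveI : DiscreteTopology (Fin m) := ⟨rfl⟩
  have hZc : IsClosed {z : ℤ → Fin m | ZIn F z} := by
    have he : {z : ℤ → Fin m | ZIn F z} =
        ⋂ k : ℤ, (fun (z : ℤ → Fin m) => (fun i : Fin N => z (k + (i:ℤ)))) ⁻¹' Fᶜ := by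
      ext z
      simp only [Set.mem_iInter, Set.mem_preimage, Set.mem_compl_iff, Set.mem_setOf_eq]
      rfl
    rw [he]
    exact isClosed_iInter fun k =>
      IsClosed.preimage (continuous_pi fun _ => continuous_apply _) (isClosed_discrete _)
  have hZcomp : IsCompact {z : ℤ → Fin m | ZIn F z} := hZc.isCompact
  have himg := hZcomp.image (appB_continuous rf Φf)
  exact ⟨himg, himg.isClosed⟩

variable {X : Set (ℤ → A)}

lemma x_shiftBy (hX : appB rf Φf '' {z | ZIn F z} = X) {x : ℤ → A} (hx : x ∈ X) (t : ℤ) :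
    shiftBy t x ∈ X := by
  rw [← hX] at hx ⊢
  obtain ⟨z, hz, rfl⟩ := hx
  exact ⟨shiftBy t z, hz.shiftBy t, appB_shiftBy t z⟩

lemma exists_repeat (hX : appB rf Φf '' {z | ZIn F z} = X)
    (hch : ∀ {n₁ n₂ : ℕ} (u : Fin n₁ → A) (v : Fin n₂ → A),
      (∃ x ∈ X, ∃ k : ℤ, ∀ i : Fin n₁, x (k + (i:ℤ)) = u i) →
      (∃ x ∈ X, ∃ k : ℤ, ∀ i : Fin n₂, x (k + (i:ℤ)) = v i) →
      ∃ e : ℕ, ChainW F Φf u v e)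
    {l : ℕ} {w : Fin l → A} (hw : ∃ x ∈ X, ∃ k : ℤ, ∀ i : Fin l, x (k + (i:ℤ)) = w i) :
    ∃ z, ZIn F z ∧ ∃ q : ℕ → ℤ,
      (∀ n, q n + (l:ℤ) + 1 ≤ q (n+1)) ∧ (∀ n, 0 ≤ q n) ∧
      (∀ n, Pres (appB rf Φf z) (q n) w) := by
  classical
  -- one-step extension
  have step : ∀ (x : ℤ → A) (L : ℕ), x ∈ X → ∃ pe : (ℤ → A) × ℕ, pe.1 ∈ X ∧
      (∀ i : ℤ, 0 ≤ i → i < (L:ℤ) → pe.1 i = x i) ∧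
      Pres pe.1 ((L:ℤ) + (pe.2:ℤ)) w := by
    intro x L hx
    have hP : ∃ x' ∈ X, ∃ k : ℤ, ∀ i : Fin L, x' (k + (i:ℤ)) = (fun i : Fin L => x ((i:ℕ):ℤ)) i :=
      ⟨x, hx, 0, fun i => by simp⟩
    obtain ⟨e, z, c, hz, h1, h2⟩ := hch (fun i : Fin L => x ((i:ℕ):ℤ)) w hP hw
    refine ⟨(SBC.shiftBy c (appB rf Φf z), e), ?_, ?_, ?_⟩
    · rw [← appB_shiftBy]
      rw [← hX]
      exact ⟨SBC.shiftBy c z, hz.shiftBy c, rfl⟩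
    · intro i hi1 hi2
      have := h1 ⟨i.toNat, by omega⟩
      simp only [Fin.val_mk] at this
      show appB rf Φf z (i + c) = x i
      rw [show i + c = c + ((i.toNat:ℕ):ℤ) by omega] at *
      rw [this, Int.toNat_of_nonneg hi1]
    · intro j
      show appB rf Φf z ((L:ℤ) + (e:ℤ) + (j:ℤ) + c) = w j
      rw [show (L:ℤ) + (e:ℤ) + (j:ℤ) + c = c + (L:ℤ) + (e:ℤ) + (j:ℤ) by ring]
      exact h2 j
  obtain ⟨x₀0, hx₀0, k₀, hk₀⟩ := hw
  set x₀ := SBC.shiftBy k₀ x₀0 with hx₀def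
  have hx₀X : x₀ ∈ X := x_shiftBy hX hx₀0 k₀
  have hx₀w : Pres x₀ 0 w := by
    intro i
    show x₀0 ((0:ℤ) + (i:ℤ) + k₀) = w i
    rw [show (0:ℤ) + (i:ℤ) + k₀ = k₀ + (i:ℤ) by ring]
    exact hk₀ i
  set f : (ℤ → A) × ℕ → (ℤ → A) × ℕ := fun p =>
    if h : p.1 ∈ X then (((step p.1 (p.2+1) h).choose.1),
      p.2 + 1 + (step p.1 (p.2+1) h).choose.2 + l) else p with hfdef
  set s : ℕ → (ℤ → A) × ℕ := fun n => f^[n] (x₀, l) with hsdef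
  have hs0 : s 0 = (x₀, l) := rfl
  have hssucc : ∀ n, s (n+1) = f (s n) := fun n => Function.iterate_succ_apply' f n _
  -- invariants
  have hinv : ∀ n, (s n).1 ∈ X ∧ l ≤ (s n).2 ∧ Pres (s n).1 (((s n).2:ℤ) - l) w := by
    intro n
    induction n with
    | zero =>
      refine ⟨hx₀X, le_refl _, ?_⟩
      rw [hs0]
      intro i
      show x₀ ((l:ℤ) - (l:ℤ) + (i:ℤ)) = w i
      rw [show (l:ℤ) - (l:ℤ) + (i:ℤ) = 0 + (i:ℤ) by ring]
      exact hx₀w i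
    | succ n ih =>
      obtain ⟨h1, h2, h3⟩ := ih
      rw [hssucc n]
      have hspec := (step (s n).1 ((s n).2+1) h1).choose_spec
      show (f (s n)).1 ∈ X ∧ _ ∧ _
      rw [hfdef]
      simp only [dif_pos h1]
      refine ⟨hspec.1, by omega, ?_⟩
      intro i
      have := hspec.2.2 i
      convert this using 2
      push_cast
      ring
  have hagree : ∀ n, ∀ i : ℤ, 0 ≤ i → i < ((s n).2:ℤ) → (s (n+1)).1 i = (s n).1 i := by
    intro n i hi1 hi2
    have h1 := (hinv n).1
    have hspec := (step (s n).1 ((s n).2+1) h1).choose_spec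
    rw [hssucc n, hfdef]
    simp only [dif_pos h1]
    exact hspec.2.1 i hi1 (by push_cast; omega)
  have hmono : ∀ n, ((s n).2:ℤ) + (l:ℤ) + 1 ≤ ((s (n+1)).2:ℤ) := by
    intro n
    have h1 := (hinv n).1
    rw [hssucc n, hfdef]
    simp only [dif_pos h1]
    push_cast
    omega
  -- nested closed sets
  have hagree' : ∀ n j, n ≤ j → ∀ i : ℤ, 0 ≤ i → i < ((s n).2:ℤ) → (s j).1 i = (s n).1 i := by
    intro n j hnj
    induction j with
    | zero => intro i h1 h2; rw [Nat.le_zero.mp hnj]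
    | succ j ihj =>
      rcases Nat.lt_or_ge n (j+1) with hlt | hge
      · intro i h1 h2
        have hnle : n ≤ j := by omega
        have hle : ((s n).2:ℤ) ≤ ((s j).2:ℤ) := by
          clear ihj
          induction j with
          | zero => rw [Nat.le_zero.mp hnle]
          | succ j ihj2 =>
            rcases Nat.lt_or_ge n (j+1) with h | h
            · have := hmono j
              have := ihj2 (by omega)
              omega
            · rw [show n = j + 1 by omega]
        rw [hagree j i h1 (by omega)]
        exact ihj hnle i h1 h2
      · intro i h1 h2
        rw [show n = j + 1 by omega]
  letI : TopologicalSpace (Fin m) := ⊥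
  haveI : DiscreteTopology (Fin m) := ⟨rfl⟩
  have hXc : IsClosed X := by rw [← hX]; exact (ximg_compact (Φf := Φf)).2
  set D : ℕ → Set (ℤ → A) := fun n =>
    X ∩ ⋂ i : ℤ, {y | 0 ≤ i → i < ((s n).2:ℤ) → y i = (s n).1 i} with hDdef
  have hDclosed : ∀ n, IsClosed (D n) := by
    intro n
    refine hXc.inter (isClosed_iInter fun i => ?_)
    by_cases h1 : (0:ℤ) ≤ i
    · by_cases h2 : i < ((s n).2:ℤ)
      · have : {y : ℤ → A | 0 ≤ i → i < ((s n).2:ℤ) → y i = (s n).1 i} =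
            (fun y : ℤ → A => y i) ⁻¹' {(s n).1 i} := by
          ext y; simp [h1, h2]
        rw [this]
        exact IsClosed.preimage (continuous_apply i) (isClosed_discrete _)
      · have : {y : ℤ → A | 0 ≤ i → i < ((s n).2:ℤ) → y i = (s n).1 i} = Set.univ := by
          ext y; simp [h2]
        rw [this]; exact isClosed_univ
    · have : {y : ℤ → A | 0 ≤ i → i < ((s n).2:ℤ) → y i = (s n).1 i} = Set.univ := by
        ext y; simp [h1]
      rw [this]; exact isClosed_univ
  have hDne : ∀ n, (D n).Nonempty := by
    intro n
    exact ⟨(s n).1, (hinv n).1, by simp only [Set.mem_iInter]; intro i h1 h2; rfl⟩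
  have hDmono : ∀ n, D (n+1) ⊆ D n := by
    intro n y hy
    obtain ⟨hyX, hyA⟩ := hy
    simp only [Set.mem_iInter, Set.mem_setOf_eq] at hyA
    refine ⟨hyX, ?_⟩
    simp only [Set.mem_iInter, Set.mem_setOf_eq]
    intro i h1 h2
    have hm := hmono n
    rw [hyA i h1 (by omega)]
    exact hagree n i h1 h2
  have hnei : (⋂ n, D n).Nonempty :=
    IsCompact.nonempty_iInter_of_sequence_nonempty_isCompact_isClosed D hDmono hDne
      ((hDclosed 0).isCompact) hDclosed
  obtain ⟨xinf, hxinf⟩ := hnei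
  simp only [Set.mem_iInter] at hxinf
  have hxinfX : xinf ∈ X := (hxinf 0).1
  rw [← hX] at hxinfX
  obtain ⟨z, hz, hphz⟩ := hxinfX
  refine ⟨z, hz, fun n => ((s n).2:ℤ) - l,
    fun n => by
      show ((s n).2:ℤ) - l + (l:ℤ) + 1 ≤ ((s (n+1)).2:ℤ) - l
      have := hmono n; omega,
    fun n => by
      show (0:ℤ) ≤ ((s n).2:ℤ) - l
      have := (hinv n).2.1; omega, ?_⟩
  intro n j
  have hxinfn := (hxinf n).2
  simp only [Set.mem_iInter, Set.mem_setOf_eq] at hxinfn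
  have hl := (hinv n).2.1
  have hj : ((j:ℕ):ℤ) < (l:ℤ) := by exact_mod_cast j.2
  have hj0 : (0:ℤ) ≤ ((j:ℕ):ℤ) := Int.natCast_nonneg _
  rw [hphz]
  rw [hxinfn (((s n).2:ℤ) - l + (j:ℤ)) (by push_cast; omega) (by omega)]
  exact (hinv n).2.2 j

variable {B : Type*} {rp : ℕ} {Φp : (Fin (2*rp+1) → A) → B} {M R : ℕ}

lemma class_inj (hX : appB rf Φf '' {z | ZIn F z} = X)
    (hfto : ∀ y : ℤ → B, (X ∩ (appB rp Φp) ⁻¹' {y}).Finite)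
    (hch : ∀ {n₁ n₂ : ℕ} (u : Fin n₁ → A) (v : Fin n₂ → A),
      (∃ x ∈ X, ∃ k : ℤ, ∀ i : Fin n₁, x (k + (i:ℤ)) = u i) →
      (∃ x ∈ X, ∃ k : ℤ, ∀ i : Fin n₂, x (k + (i:ℤ)) = v i) →
      ∃ e : ℕ, ChainW F Φf u v e)
    (hM : N ≤ M + 1) (hM2 : 2*rf ≤ M) (hRrf : rf ≤ R) (hRM : M ≤ R + rf)
    (hMR : M ≤ R) (hRrp : 2*rp ≤ R)
    {l : ℕ} (hl : 2*R < l) {w w' : Fin l → A}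
    (hw : ∃ x ∈ X, ∃ k : ℤ, ∀ i : Fin l, x (k + (i:ℤ)) = w i)
    (hmL : ∀ i : Fin l, (i:ℕ) < R → w i = w' i)
    (hmR : ∀ i : Fin l, l - R ≤ (i:ℕ) → w i = w' i)
    (hT : TsetW F Φf M w = TsetW F Φf M w')
    (hB : BimgW Φp w = BimgW Φp w') : w = w' := by
  classical
  by_contra hne
  have hne' : ¬ ∀ i, w i = w' i := fun h => hne (funext h)
  push_neg at hne'
  obtain ⟨i₀, hi₀⟩ := hne'
  obtain ⟨z₀, hz₀, q, hsep, hqpos, hocc⟩ := exists_repeat hX @hch hw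
  have hsep' : ∀ a b : ℕ, a < b → q a + (l:ℤ) ≤ q b := by
    intro a b hab
    induction b with
    | zero => omega
    | succ b ihb =>
      rcases Nat.lt_or_ge a b with h | h
      · have := ihb h
        have := hsep b
        omega
      · have : a = b := by omega
        subst this
        have := hsep a
        omega
  have hlM : M ≤ l := by omega
  set SW : (ℤ → Fin m) × ℕ → (ℤ → Fin m) × ℕ := fun p =>
    (if h : ZIn F p.1 ∧ Pres (appB rf Φf p.1) (q p.2) w then
      (swap_lemma hM hM2 hRrf hRM hlM h.1 h.2 hmL hmR (le_of_eq hT)).choose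
    else p.1, p.2 + 1) with hSWdef
  set s : ℕ → (ℤ → Fin m) × ℕ := fun n => SW^[n] (z₀, 0) with hsdef
  have hssucc : ∀ n, s (n+1) = SW (s n) := fun n => Function.iterate_succ_apply' SW n _
  have hs2 : ∀ n, (s n).2 = n := by
    intro n
    induction n with
    | zero => rfl
    | succ n ih => rw [hssucc n, hSWdef]; simp only []; omega
  have hJ : ∀ n, ZIn F (s n).1 ∧ (∀ k, n ≤ k → Pres (appB rf Φf (s n).1) (q k) w) ∧
      (∀ k, k < n → appB rf Φf (s n).1 (q k + ((i₀:ℕ):ℤ)) = w' i₀) ∧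
      appB rp Φp (appB rf Φf (s n).1) = appB rp Φp (appB rf Φf z₀) := by
    intro n
    induction n with
    | zero => exact ⟨hz₀, fun k _ => hocc k, fun k hk => absurd hk (by omega), rfl⟩
    | succ n ih =>
      obtain ⟨ih1, ih2, ih3, ih4⟩ := ih
      have hcond : ZIn F (s n).1 ∧ Pres (appB rf Φf (s n).1) (q (s n).2) w := by
        rw [hs2 n]; exact ⟨ih1, ih2 n le_rfl⟩
      have hfst : (s (n+1)).1 =
          (swap_lemma hM hM2 hRrf hRM hlM hcond.1 hcond.2 hmL hmR (le_of_eq hT)).choose := by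
        rw [hssucc n, hSWdef]
        simp only [dif_pos hcond]
      have hspec := (swap_lemma hM hM2 hRrf hRM hlM hcond.1 hcond.2 hmL hmR
        (le_of_eq hT)).choose_spec
      rw [← hfst] at hspec
      rw [hs2 n] at hspec
      obtain ⟨hz1, hpres', hout⟩ := hspec
      have hil : ((i₀:ℕ):ℤ) < (l:ℤ) := by exact_mod_cast i₀.2
      have hi0nn : (0:ℤ) ≤ ((i₀:ℕ):ℤ) := Int.natCast_nonneg _
      refine ⟨hz1, ?_, ?_, ?_⟩
      · intro k hk
        intro j
        have hjl : ((j:ℕ):ℤ) < (l:ℤ) := by exact_mod_cast j.2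
        have hjnn : (0:ℤ) ≤ ((j:ℕ):ℤ) := Int.natCast_nonneg _
        rw [hout (q k + (j:ℤ)) (Or.inr (by have := hsep' n k (by omega); omega))]
        exact ih2 k (by omega) j
      · intro k hk
        rcases Nat.lt_or_ge k n with h | h
        · rw [hout (q k + ((i₀:ℕ):ℤ)) (Or.inl (by have := hsep' k n h; omega))]
          exact ih3 k h
        · have : k = n := by omega
          subst this
          exact hpres' i₀
      · have := pi_eq_of_swap hRrp hout (ih2 n le_rfl) hpres' hmL hmR hB
        rw [this, ih4]
  set y : ℕ → (ℤ → A) := fun n => appB rf Φf (s n).1 with hydef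
  have hyX : ∀ n, y n ∈ X := by
    intro n
    rw [← hX]
    exact ⟨(s n).1, (hJ n).1, rfl⟩
  have hyπ : ∀ n, appB rp Φp (y n) = appB rp Φp (appB rf Φf z₀) := fun n => (hJ n).2.2.2
  have hval1 : ∀ n, y n (q n + ((i₀:ℕ):ℤ)) = w i₀ := fun n => (hJ n).2.1 n le_rfl i₀
  have hval2 : ∀ a b, a < b → y b (q a + ((i₀:ℕ):ℤ)) = w' i₀ := fun a b h => (hJ b).2.2.1 a h
  have hinj : Function.Injective y := by
    intro a b hab
    by_contra hne2
    rcases Nat.lt_or_ge a b with h | h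
    · have h1 := hval1 a
      have h2 := hval2 a b h
      rw [hab] at h1
      rw [h1] at h2
      exact hi₀ h2
    · have h : b < a := by omega
      have h1 := hval1 b
      have h2 := hval2 b a h
      rw [← hab] at h1
      rw [h1] at h2
      exact hi₀ h2
  have hmem : ∀ n, y n ∈ X ∩ (appB rp Φp) ⁻¹' {appB rp Φp (appB rf Φf z₀)} := by
    intro n
    exact ⟨hyX n, by simp only [Set.mem_preimage, Set.mem_singleton_iff]; exact hyπ n⟩
  exact (hfto _).not_infinite (Set.infinite_of_injective_forall_mem hinj hmem)

end xtop

section counting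
open Classical in
/-- number of `n`-words of a subshift-like set -/
noncomputable def wordCard {A : Type*} [Fintype A] (S : Set (ℤ → A)) (n : ℕ) : ℕ :=
  (Finset.univ.filter (fun w : Fin n → A =>
    ∃ x ∈ S, ∃ k : ℤ, ∀ i : Fin n, x (k + (i:ℤ)) = w i)).card

variable {A : Type*} [Fintype A] {S : Set (ℤ → A)}

open Classical in
lemma wordCard_pos (hS : S.Nonempty) (n : ℕ) : 0 < wordCard S n := by
  obtain ⟨x, hx⟩ := hS
  refine Finset.card_pos.mpr ⟨fun i : Fin n => x ((i:ℕ):ℤ), ?_⟩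
  simp only [Finset.mem_filter, Finset.mem_univ, true_and]
  exact ⟨x, hx, 0, fun i => by rw [zero_add]⟩

open Classical in
lemma wordCard_le_mul (n c : ℕ) :
    wordCard S (n + c) ≤ wordCard S n * Fintype.card (Fin c → A) := by
  classical
  have hinj : Set.InjOn (fun w : Fin (n+c) → A =>
      ((fun i : Fin n => w ⟨(i:ℕ), by omega⟩, fun i : Fin c => w ⟨n + (i:ℕ), by omega⟩) :
        (Fin n → A) × (Fin c → A)))
      (Finset.univ.filter (fun w : Fin (n+c) → A =>
        ∃ x ∈ S, ∃ k : ℤ, ∀ i : Fin (n+c), x (k + (i:ℤ)) = w i)) := by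
    intro w1 h1 w2 h2 heq
    simp only [Prod.mk.injEq] at heq
    funext t
    by_cases ht : (t:ℕ) < n
    · have := congrFun heq.1 ⟨(t:ℕ), ht⟩
      simpa [Fin.eta] using this
    · have h2' : (t:ℕ) - n < c := by omega
      have := congrFun heq.2 ⟨(t:ℕ) - n, h2'⟩
      simp only at this
      rwa [show (⟨n + ((t:ℕ) - n), by omega⟩ : Fin (n+c)) = t by
        apply Fin.ext; simp; omega] at this
  have hmap : ∀ w ∈ (Finset.univ.filter (fun w : Fin (n+c) → A =>
      ∃ x ∈ S, ∃ k : ℤ, ∀ i : Fin (n+c), x (k + (i:ℤ)) = w i)),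
      (fun i : Fin n => w ⟨(i:ℕ), by omega⟩, fun i : Fin c => w ⟨n + (i:ℕ), by omega⟩) ∈
      (Finset.univ.filter (fun w : Fin n → A =>
        ∃ x ∈ S, ∃ k : ℤ, ∀ i : Fin n, x (k + (i:ℤ)) = w i)) ×ˢ Finset.univ := by
    intro w hw
    simp only [Finset.mem_filter, Finset.mem_univ, true_and] at hw ⊢
    rw [Finset.mem_product]
    refine ⟨?_, Finset.mem_univ _⟩
    simp only [Finset.mem_filter, Finset.mem_univ, true_and]
    obtain ⟨x, hx, k, hk⟩ := hw
    exact ⟨x, hx, k, fun i => by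
      have := hk ⟨(i:ℕ), by omega⟩
      simpa using this⟩
  calc wordCard S (n+c) ≤ ((Finset.univ.filter (fun w : Fin n → A =>
        ∃ x ∈ S, ∃ k : ℤ, ∀ i : Fin n, x (k + (i:ℤ)) = w i)) ×ˢ
        (Finset.univ : Finset (Fin c → A))).card :=
      Finset.card_le_card_of_injOn _ hmap hinj
    _ = wordCard S n * Fintype.card (Fin c → A) := by
      rw [Finset.card_product, Finset.card_univ]
      rfl

end counting

section bigcount
variable {A B : Type*} [Fintype A] [Fintype B]
  [TopologicalSpace A] [DiscreteTopology A]
  {m N : ℕ} {F : Set (Fin N → Fin m)} {rf : ℕ} {Φf : (Fin (2*rf+1) → Fin m) → A}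
  {rp : ℕ} {Φp : (Fin (2*rp+1) → A) → B}
  {X : Set (ℤ → A)} {Y : Set (ℤ → B)} {S : Set (ℤ → A)}

open Classical in
lemma yWords_le (hYS : Y ⊆ appB rp Φp '' S) (n' : ℕ) :
    wordCard Y n' ≤ wordCard S (n' + 2*rp) := by
  by_cases hzero : wordCard Y n' = 0
  · omega
  · have hfne : (Finset.univ.filter (fun v : Fin n' → B =>
        ∃ y ∈ Y, ∃ k : ℤ, ∀ i : Fin n', y (k + (i:ℤ)) = v i)).Nonempty := by
      rw [← Finset.card_pos]
      exact Nat.pos_of_ne_zero hzero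
    obtain ⟨v₀, hv₀⟩ := hfne
    simp only [Finset.mem_filter, Finset.mem_univ, true_and] at hv₀
    obtain ⟨y₀, hy₀, _⟩ := hv₀
    obtain ⟨s₀', _, _⟩ := hYS hy₀
    haveI : Nonempty A := ⟨s₀' 0⟩
    have key : ∀ v : Fin n' → B, (∃ y ∈ Y, ∃ k : ℤ, ∀ i : Fin n', y (k + (i:ℤ)) = v i) →
        ∃ w : Fin (n' + 2*rp) → A, (∃ x ∈ S, ∃ k : ℤ, ∀ i : Fin (n'+2*rp), x (k + (i:ℤ)) = w i) ∧
          ∀ t : Fin n', v t = BimgW Φp w ⟨(t:ℕ), by have := t.2; omega⟩ := by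
      intro v hv
      obtain ⟨y, hy, k, hk⟩ := hv
      obtain ⟨s₀, hs₀, hπ⟩ := hYS hy
      refine ⟨fun j => s₀ ((k - rp) + (j:ℤ)), ⟨s₀, hs₀, k - rp, fun j => rfl⟩, ?_⟩
      intro t
      have hpres : Pres s₀ (k - rp) (fun j : Fin (n'+2*rp) => s₀ ((k - rp) + (j:ℤ))) :=
        fun j => rfl
      have := pres_Bimg (Φp := Φp) hpres ⟨(t:ℕ), by have := t.2; omega⟩
      simp only [Fin.val_mk] at this
      rw [← this, show k - rp + (rp:ℤ) + ((t:ℕ):ℤ) = k + (t:ℤ) by omega, hπ]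
      exact (hk t).symm
    set f : (Fin n' → B) → (Fin (n' + 2*rp) → A) := fun v =>
      if h : (∃ y ∈ Y, ∃ k : ℤ, ∀ i : Fin n', y (k + (i:ℤ)) = v i) then (key v h).choose
      else fun _ => Classical.arbitrary _ with hfdef
    have hmap : ∀ v ∈ (Finset.univ.filter (fun v : Fin n' → B =>
        ∃ y ∈ Y, ∃ k : ℤ, ∀ i : Fin n', y (k + (i:ℤ)) = v i)), f v ∈
        (Finset.univ.filter (fun w : Fin (n'+2*rp) → A =>
          ∃ x ∈ S, ∃ k : ℤ, ∀ i : Fin (n'+2*rp), x (k + (i:ℤ)) = w i)) := by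
      intro v hv
      simp only [Finset.mem_filter, Finset.mem_univ, true_and] at hv ⊢
      rw [hfdef]
      simp only [dif_pos hv]
      exact (key v hv).choose_spec.1
    have hinj : Set.InjOn f (Finset.univ.filter (fun v : Fin n' → B =>
        ∃ y ∈ Y, ∃ k : ℤ, ∀ i : Fin n', y (k + (i:ℤ)) = v i)) := by
      intro v1 h1 v2 h2 heq
      simp only [Finset.coe_filter, Finset.mem_univ, true_and, Set.mem_setOf_eq] at h1 h2
      rw [hfdef] at heq
      simp only [dif_pos h1, dif_pos h2] at heq
      funext t
      rw [(key v1 h1).choose_spec.2 t, (key v2 h2).choose_spec.2 t, heq]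
    exact Finset.card_le_card_of_injOn f hmap hinj

open Classical in
lemma xWords_le (hX : appB rf Φf '' {z | ZIn F z} = X)
    (hfto : ∀ y : ℤ → B, (X ∩ (appB rp Φp) ⁻¹' {y}).Finite)
    (hch : ∀ {n₁ n₂ : ℕ} (u : Fin n₁ → A) (v : Fin n₂ → A),
      (∃ x ∈ X, ∃ k : ℤ, ∀ i : Fin n₁, x (k + (i:ℤ)) = u i) →
      (∃ x ∈ X, ∃ k : ℤ, ∀ i : Fin n₂, x (k + (i:ℤ)) = v i) →
      ∃ e : ℕ, ChainW F Φf u v e)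
    (hY : appB rp Φp '' X = Y)
    {M R : ℕ} (hM : N ≤ M + 1) (hM2 : 2*rf ≤ M) (hRrf : rf ≤ R) (hRM : M ≤ R + rf)
    (hMR : M ≤ R) (hRrp : 2*rp ≤ R)
    {l : ℕ} (hl : 2*R < l) :
    wordCard X l ≤ wordCard Y (l - 2*rp) *
      Fintype.card ((Fin R → A) × (Fin R → A) ×
        Set ((Fin M → Fin m) × (Fin M → Fin m))) := by
  set f : (Fin l → A) → (Fin (l - 2*rp) → B) × ((Fin R → A) × (Fin R → A) ×
      Set ((Fin M → Fin m) × (Fin M → Fin m))) := fun w =>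
    (BimgW Φp w, (fun i : Fin R => w ⟨(i:ℕ), by have := i.2; omega⟩,
      fun i : Fin R => w ⟨l - R + (i:ℕ), by have := i.2; omega⟩, TsetW F Φf M w)) with hfdef
  have hmap : ∀ w ∈ (Finset.univ.filter (fun w : Fin l → A =>
      ∃ x ∈ X, ∃ k : ℤ, ∀ i : Fin l, x (k + (i:ℤ)) = w i)), f w ∈
      (Finset.univ.filter (fun v : Fin (l - 2*rp) → B =>
        ∃ y ∈ Y, ∃ k : ℤ, ∀ i : Fin (l - 2*rp), y (k + (i:ℤ)) = v i)) ×ˢ Finset.univ := by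
    intro w hw
    simp only [Finset.mem_filter, Finset.mem_univ, true_and] at hw
    rw [Finset.mem_product]
    refine ⟨?_, Finset.mem_univ _⟩
    simp only [Finset.mem_filter, Finset.mem_univ, true_and]
    obtain ⟨x, hx, k, hk⟩ := hw
    refine ⟨appB rp Φp x, by rw [← hY]; exact ⟨x, hx, rfl⟩, k + rp, fun t => ?_⟩
    have := pres_Bimg (Φp := Φp) hk t
    rw [show k + (rp:ℤ) + ((t:ℕ):ℤ) = k + (rp:ℤ) + (t:ℤ) by norm_cast] at this
    exact this
  have hinj : Set.InjOn f (Finset.univ.filter (fun w : Fin l → A =>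
      ∃ x ∈ X, ∃ k : ℤ, ∀ i : Fin l, x (k + (i:ℤ)) = w i)) := by
    intro w1 h1 w2 h2 heq
    simp only [Finset.coe_filter, Finset.mem_univ, true_and, Set.mem_setOf_eq] at h1 h2
    rw [hfdef] at heq
    simp only [Prod.mk.injEq] at heq
    obtain ⟨hB, hmL', hmR', hT⟩ := heq
    have hmL : ∀ i : Fin l, (i:ℕ) < R → w1 i = w2 i := by
      intro i hi
      have := congrFun hmL' ⟨(i:ℕ), hi⟩
      simpa [Fin.eta] using this
    have hmR : ∀ i : Fin l, l - R ≤ (i:ℕ) → w1 i = w2 i := by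
      intro i hi
      have hj : (i:ℕ) - (l - R) < R := by have := i.2; omega
      have := congrFun hmR' ⟨(i:ℕ) - (l - R), hj⟩
      simp only at this
      rwa [show (⟨l - R + ((i:ℕ) - (l - R)), by have := i.2; omega⟩ : Fin l) = i by
        apply Fin.ext; simp; omega] at this
    exact class_inj hX hfto @hch hM hM2 hRrf hRM hMR hRrp hl h1 hmL hmR hT hB
  calc wordCard X l ≤ ((Finset.univ.filter (fun v : Fin (l - 2*rp) → B =>
        ∃ y ∈ Y, ∃ k : ℤ, ∀ i : Fin (l - 2*rp), y (k + (i:ℤ)) = v i)) ×ˢ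
        (Finset.univ : Finset ((Fin R → A) × (Fin R → A) ×
          Set ((Fin M → Fin m) × (Fin M → Fin m))))).card :=
      Finset.card_le_card_of_injOn f hmap hinj
    _ = _ := by
      rw [Finset.card_product, Finset.card_univ]
      rfl

open Classical in
lemma insertion_count (hX : appB rf Φf '' {z | ZIn F z} = X) (hSX : S ⊆ X)
    {g : ℕ} (hg : ∀ {n₁ n₂ : ℕ} (u : Fin n₁ → A) (v : Fin n₂ → A),
      (∃ x ∈ X, ∃ k : ℤ, ∀ i : Fin n₁, x (k + (i:ℤ)) = u i) →
      (∃ x ∈ X, ∃ k : ℤ, ∀ i : Fin n₂, x (k + (i:ℤ)) = v i) →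
      ∃ e : ℕ, e ≤ g ∧ ChainW F Φf u v e)
    {Lu : ℕ} {u : Fin Lu → A} (hLu : 0 < Lu)
    (huX : ∃ x ∈ X, ∃ k : ℤ, ∀ i : Fin Lu, x (k + (i:ℤ)) = u i)
    (hnoU : ∀ x ∈ S, ∀ k : ℤ, ¬ ∀ i : Fin Lu, x (k + (i:ℤ)) = u i)
    (n : ℕ) :
    n * wordCard S n ≤ ((Lu + g + 1) * ((g+1) * (g+1))) * wordCard X (n + Lu + 2*g) := by
  by_cases hzero : wordCard S n = 0
  · rw [hzero]; omega
  have hfne : (Finset.univ.filter (fun w : Fin n → A =>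
      ∃ x ∈ S, ∃ k : ℤ, ∀ i : Fin n, x (k + (i:ℤ)) = w i)).Nonempty := by
    rw [← Finset.card_pos]; exact Nat.pos_of_ne_zero hzero
  obtain ⟨w₀, hw₀⟩ := hfne
  simp only [Finset.mem_filter, Finset.mem_univ, true_and] at hw₀
  obtain ⟨xw, _, _⟩ := hw₀
  haveI : Nonempty A := ⟨xw 0⟩
  -- the key one-step construction
  have key : ∀ (s : Fin n → A), (∃ x ∈ S, ∃ k : ℤ, ∀ i : Fin n, x (k + (i:ℤ)) = s i) →
      ∀ j : ℕ, j < n → ∃ d : (ℤ → A) × ℕ × ℕ, d.1 ∈ X ∧ d.2.1 ≤ g ∧ d.2.2 ≤ g ∧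
      (∀ t : Fin n, (t:ℕ) ≤ j → d.1 (((t:ℕ):ℤ)) = s t) ∧
      (∀ t : Fin n, j < (t:ℕ) → d.1 ((((t:ℕ) + d.2.1 + Lu + d.2.2 : ℕ):ℤ)) = s t) ∧
      (∀ i : Fin Lu, d.1 (((j + 1 + d.2.1 + (i:ℕ) : ℕ):ℤ)) = u i) := by
    intro s hs j hj
    obtain ⟨xs, hxs, ks, hks⟩ := hs
    have hs₁ : ∃ x ∈ X, ∃ k : ℤ, ∀ t : Fin (j+1), x (k + (t:ℤ)) = s ⟨(t:ℕ), by omega⟩ :=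
      ⟨xs, hSX hxs, ks, fun t => hks ⟨(t:ℕ), by omega⟩⟩
    obtain ⟨e₁, he₁, za, c, hza, hpre1, hpreu⟩ := hg _ u hs₁ huX
    have hw₁ : ∃ x ∈ X, ∃ k : ℤ, ∀ t : Fin (j+1+e₁+Lu), x (k + (t:ℤ)) =
        appB rf Φf za (c + (t:ℤ)) := by
      refine ⟨appB rf Φf za, ?_, c, fun t => rfl⟩
      rw [← hX]; exact ⟨za, hza, rfl⟩
    have hs₂ : ∃ x ∈ X, ∃ k : ℤ, ∀ t : Fin (n - (j+1)), x (k + (t:ℤ)) =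
        s ⟨j + 1 + (t:ℕ), by have := t.2; omega⟩ := by
      refine ⟨xs, hSX hxs, ks + (j+1 : ℕ), fun t => ?_⟩
      have := hks ⟨j + 1 + (t:ℕ), by have := t.2; omega⟩
      rw [← this]
      congr 1
      push_cast
      ring
    obtain ⟨e₂, he₂, zb, c', hzb, hpre2, hpre3⟩ := hg _ _ hw₁ hs₂
    refine ⟨(SBC.shiftBy c' (appB rf Φf zb), e₁, e₂), ?_, he₁, he₂, ?_, ?_, ?_⟩
    · rw [← appB_shiftBy, ← hX]
      exact ⟨SBC.shiftBy c' zb, hzb.shiftBy c', rfl⟩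
    · intro t ht
      show appB rf Φf zb (((t:ℕ):ℤ) + c') = s t
      have h1 := hpre2 ⟨(t:ℕ), by have := t.2; omega⟩
      simp only [Fin.val_mk] at h1
      rw [show ((t:ℕ):ℤ) + c' = c' + ((t:ℕ):ℤ) by ring, h1]
      have h2 := hpre1 ⟨(t:ℕ), by omega⟩
      simp only [Fin.val_mk] at h2
      rw [h2]
    · intro t ht
      show appB rf Φf zb ((((t:ℕ) + e₁ + Lu + e₂ : ℕ):ℤ) + c') = s t
      have h1 := hpre3 ⟨(t:ℕ) - (j+1), by have := t.2; omega⟩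
      simp only [Fin.val_mk] at h1
      rw [show (((t:ℕ) + e₁ + Lu + e₂ : ℕ):ℤ) + c' =
        c' + ((j+1+e₁+Lu : ℕ):ℤ) + (e₂:ℤ) + ((((t:ℕ) - (j+1) : ℕ)):ℤ) by
          have := t.2; push_cast; omega, h1]
      refine congrArg s (Fin.ext ?_)
      simp only [Fin.val_mk]
      omega
    · intro i
      show appB rf Φf zb (((j + 1 + e₁ + (i:ℕ) : ℕ):ℤ) + c') = u i
      have h1 := hpre2 ⟨j + 1 + e₁ + (i:ℕ), by have := i.2; omega⟩
      simp only [Fin.val_mk] at h1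
      rw [show ((j + 1 + e₁ + (i:ℕ) : ℕ):ℤ) + c' = c' + ((j+1+e₁+(i:ℕ) : ℕ):ℤ) by ring, h1]
      have h2 := hpreu i
      rw [← h2]
      congr 1
      push_cast
      ring
  -- choice function
  set D : (Fin n → A) × ℕ → (ℤ → A) × ℕ × ℕ := fun p =>
    if h : (∃ x ∈ S, ∃ k : ℤ, ∀ i : Fin n, x (k + (i:ℤ)) = p.1 i) ∧ p.2 < n then
      (key p.1 h.1 p.2 h.2).choose
    else (fun _ => Classical.arbitrary A, 0, 0) with hDdef
  have hDspec : ∀ p : (Fin n → A) × ℕ,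
      (∃ x ∈ S, ∃ k : ℤ, ∀ i : Fin n, x (k + (i:ℤ)) = p.1 i) → p.2 < n →
      (D p).1 ∈ X ∧ (D p).2.1 ≤ g ∧ (D p).2.2 ≤ g ∧
      (∀ t : Fin n, (t:ℕ) ≤ p.2 → (D p).1 (((t:ℕ):ℤ)) = p.1 t) ∧
      (∀ t : Fin n, p.2 < (t:ℕ) → (D p).1 ((((t:ℕ) + (D p).2.1 + Lu + (D p).2.2 : ℕ):ℤ)) = p.1 t) ∧
      (∀ i : Fin Lu, (D p).1 (((p.2 + 1 + (D p).2.1 + (i:ℕ) : ℕ):ℤ)) = u i) := by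
    intro p h1 h2
    rw [hDdef]
    simp only [dif_pos (And.intro h1 h2)]
    exact (key p.1 h1 p.2 h2).choose_spec
  set G : (Fin n → A) × ℕ → (Fin (n + Lu + 2*g) → A) := fun p =>
    fun i => (D p).1 (((i:ℕ):ℤ)) with hGdef
  have hGeval : ∀ (p : (Fin n → A) × ℕ) (i : Fin (n + Lu + 2*g)),
      G p i = (D p).1 (((i:ℕ):ℤ)) := fun _ _ => rfl
  set P : Finset ((Fin n → A) × ℕ) := (Finset.univ.filter (fun w : Fin n → A =>
    ∃ x ∈ S, ∃ k : ℤ, ∀ i : Fin n, x (k + (i:ℤ)) = w i)) ×ˢ Finset.range n with hPdef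
  have hPmem : ∀ p ∈ P, (∃ x ∈ S, ∃ k : ℤ, ∀ i : Fin n, x (k + (i:ℤ)) = p.1 i) ∧ p.2 < n := by
    intro p hp
    rw [hPdef, Finset.mem_product] at hp
    obtain ⟨hp1, hp2⟩ := hp
    simp only [Finset.mem_filter, Finset.mem_univ, true_and] at hp1
    rw [Finset.mem_range] at hp2
    exact ⟨hp1, hp2⟩
  -- image lands in words of X
  have himg : ∀ p ∈ P, G p ∈ (Finset.univ.filter (fun w : Fin (n + Lu + 2*g) → A =>
      ∃ x ∈ X, ∃ k : ℤ, ∀ i : Fin (n + Lu + 2*g), x (k + (i:ℤ)) = w i)) := by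
    intro p hp
    obtain ⟨h1, h2⟩ := hPmem p hp
    simp only [Finset.mem_filter, Finset.mem_univ, true_and]
    exact ⟨(D p).1, (hDspec p h1 h2).1, 0, fun i => by rw [zero_add]⟩
  -- multiplicity bound
  have hmult : ∀ b ∈ P.image G, (P.filter (fun p => G p = b)).card ≤
      (Lu + g + 1) * ((g+1) * (g+1)) := by
    intro b hb
    obtain ⟨p₀, hp₀P, hGp₀⟩ := Finset.mem_image.mp hb
    obtain ⟨hp₀1, hp₀2⟩ := hPmem p₀ hp₀P
    have hOccEx : ∃ t : ℕ, ∃ _ : t + Lu ≤ n + Lu + 2*g,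
        ∀ i : Fin Lu, b ⟨t + (i:ℕ), by have := i.2; omega⟩ = u i := by
      obtain ⟨_, hg1, _, _, _, hu3⟩ := hDspec p₀ hp₀1 hp₀2
      refine ⟨p₀.2 + 1 + (D p₀).2.1, by omega, fun i => ?_⟩
      exact (congrFun hGp₀ _).symm.trans (hu3 i)
    set q0 := Nat.find hOccEx with hq0def
    have hq0spec := Nat.find_spec hOccEx
    obtain ⟨hq0b, hq0val⟩ := hq0spec
    -- for any fiber element, bounds on j
    have hfib : ∀ p ∈ P.filter (fun p => G p = b),
        q0 ≤ p.2 + 1 + (D p).2.1 ∧ p.2 + 2 ≤ q0 + Lu := by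
      intro p hp
      rw [Finset.mem_filter] at hp
      obtain ⟨hpP, hpG⟩ := hp
      obtain ⟨hp1, hp2⟩ := hPmem p hpP
      obtain ⟨_, hge1, hge2, hc1, hc2, hc3⟩ := hDspec p hp1 hp2
      constructor
      · refine Nat.find_le ⟨by omega, fun i => ?_⟩
        exact (congrFun hpG _).symm.trans (hc3 i)
      · by_contra hcon
        push_neg at hcon
        -- u occurs inside the S-part: contradiction
        obtain ⟨xs, hxs, ks, hks⟩ := hp1
        refine hnoU xs hxs (ks + (q0:ℤ)) (fun i => ?_)
        have hidx : q0 + (i:ℕ) < n := by have := i.2; omega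
        have e1 : xs (ks + (((q0 + (i:ℕ) : ℕ)):ℤ)) = p.1 ⟨q0 + (i:ℕ), hidx⟩ := by
          have := hks ⟨q0 + (i:ℕ), hidx⟩
          rw [← this]
        have e2 : p.1 ⟨q0 + (i:ℕ), hidx⟩ = b ⟨q0 + (i:ℕ), by have := i.2; omega⟩ :=
          (hc1 ⟨q0 + (i:ℕ), hidx⟩ (by simp only [Fin.val_mk]; omega)).symm.trans
            ((hGeval p ⟨q0 + (i:ℕ), by have := i.2; omega⟩).symm.trans (congrFun hpG _))
        rw [show ks + (q0:ℤ) + (i:ℤ) = ks + (((q0 + (i:ℕ) : ℕ)):ℤ) by push_cast; ring]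
        rw [e1, e2, hq0val i]
    -- injection into a triple of ranges
    have hinj2 : Set.InjOn (fun p => ((p.2 + g + 1 - q0, (D p).2.1, (D p).2.2) : ℕ × ℕ × ℕ))
        (P.filter (fun p => G p = b)) := by
      intro p hp p' hp' heq
      have hpm := hp
      have hp'm := hp'
      rw [Finset.mem_coe, Finset.mem_filter] at hpm hp'm
      obtain ⟨hpP, hpG⟩ := hpm
      obtain ⟨hp'P, hp'G⟩ := hp'm
      obtain ⟨hb1, hb2⟩ := hfib p (by rw [Finset.mem_filter]; exact ⟨hpP, hpG⟩)
      obtain ⟨hb1', hb2'⟩ := hfib p' (by rw [Finset.mem_filter]; exact ⟨hp'P, hp'G⟩)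
      obtain ⟨hq1, hq2⟩ := hPmem p hpP
      obtain ⟨hq1', hq2'⟩ := hPmem p' hp'P
      obtain ⟨_, hge1, hge2, hc1, hc2, hc3⟩ := hDspec p hq1 hq2
      obtain ⟨_, hge1', hge2', hc1', hc2', hc3'⟩ := hDspec p' hq1' hq2'
      simp only [Prod.mk.injEq] at heq
      obtain ⟨heqj, heqe1, heqe2⟩ := heq
      have hjj : p.2 = p'.2 := by omega
      have hss : p.1 = p'.1 := by
        funext t
        by_cases ht : (t:ℕ) ≤ p.2
        · have u1 := hc1 t ht
          have u2 := hc1' t (by omega)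
          have v1 : (D p).1 (((t:ℕ):ℤ)) = b ⟨(t:ℕ), by have := t.2; omega⟩ :=
            (hGeval p ⟨(t:ℕ), by have := t.2; omega⟩).symm.trans (congrFun hpG _)
          have v2 : (D p').1 (((t:ℕ):ℤ)) = b ⟨(t:ℕ), by have := t.2; omega⟩ :=
            (hGeval p' ⟨(t:ℕ), by have := t.2; omega⟩).symm.trans (congrFun hp'G _)
          rw [← u1, ← u2, v1, v2]
        · push_neg at ht
          have u1 := hc2 t ht
          have u2 := hc2' t (by omega)
          have hbd : (t:ℕ) + (D p).2.1 + Lu + (D p).2.2 < n + Lu + 2*g := by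
            have := t.2; omega
          have v1 : (D p).1 ((((t:ℕ) + (D p).2.1 + Lu + (D p).2.2 : ℕ):ℤ)) =
              b ⟨(t:ℕ) + (D p).2.1 + Lu + (D p).2.2, hbd⟩ :=
            (hGeval p ⟨(t:ℕ) + (D p).2.1 + Lu + (D p).2.2, hbd⟩).symm.trans (congrFun hpG _)
          have v2 : (D p').1 ((((t:ℕ) + (D p').2.1 + Lu + (D p').2.2 : ℕ):ℤ)) =
              b ⟨(t:ℕ) + (D p').2.1 + Lu + (D p').2.2, by omega⟩ :=
            (hGeval p' ⟨(t:ℕ) + (D p').2.1 + Lu + (D p').2.2, by omega⟩).symm.trans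
              (congrFun hp'G _)
          rw [← u1, ← u2, v1, v2]
          congr 1
          apply Fin.ext
          simp only [Fin.val_mk]
          omega
      exact Prod.ext hss hjj
    have hmaps : ∀ p ∈ P.filter (fun p => G p = b),
        ((p.2 + g + 1 - q0, (D p).2.1, (D p).2.2) : ℕ × ℕ × ℕ) ∈
        (Finset.range (Lu + g + 1)) ×ˢ ((Finset.range (g+1)) ×ˢ (Finset.range (g+1))) := by
      intro p hp
      obtain ⟨hb1, hb2⟩ := hfib p hp
      rw [Finset.mem_filter] at hp
      obtain ⟨hpP, hpG⟩ := hp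
      obtain ⟨hq1, hq2⟩ := hPmem p hpP
      obtain ⟨_, hge1, hge2, _, _, _⟩ := hDspec p hq1 hq2
      simp only [Finset.mem_product, Finset.mem_range]
      refine ⟨by omega, by omega, by omega⟩
    calc (P.filter (fun p => G p = b)).card ≤
        ((Finset.range (Lu + g + 1)) ×ˢ ((Finset.range (g+1)) ×ˢ (Finset.range (g+1)))).card :=
        Finset.card_le_card_of_injOn _ hmaps hinj2
      _ = (Lu + g + 1) * ((g+1) * (g+1)) := by
        simp [Finset.card_product]
  -- assemble
  have hcard1 : P.card = wordCard S n * n := by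
    rw [hPdef, Finset.card_product, Finset.card_range]
    rfl
  have step1 : P.card ≤ ((Lu + g + 1) * ((g+1) * (g+1))) * (P.image G).card :=
    Finset.card_le_mul_card_image P _ hmult
  have step2 : (P.image G).card ≤ wordCard X (n + Lu + 2*g) := by
    refine le_trans (Finset.card_le_card ?_) (le_refl _)
    intro b hb
    obtain ⟨p, hp, rfl⟩ := Finset.mem_image.mp hb
    exact himg p hp
  calc n * wordCard S n = P.card := by rw [hcard1]; ring
    _ ≤ ((Lu + g + 1) * ((g+1) * (g+1))) * (P.image G).card := step1
    _ ≤ ((Lu + g + 1) * ((g+1) * (g+1))) * wordCard X (n + Lu + 2*g) :=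
        Nat.mul_le_mul_left _ step2

open Classical in
lemma no_small_support
    (hX : appB rf Φf '' {z | ZIn F z} = X)
    (hirr : ∀ {m' n' : ℕ} (u : Fin m' → A) (v : Fin n' → A),
      (∃ x ∈ X, ∃ k : ℤ, ∀ i : Fin m', x (k + (i:ℤ)) = u i) →
      (∃ x ∈ X, ∃ k : ℤ, ∀ i : Fin n', x (k + (i:ℤ)) = v i) →
      ∃ x ∈ X, ∃ i j : ℤ, i + (m':ℤ) ≤ j ∧ (∀ a : Fin m', x (i + (a:ℤ)) = u a) ∧
        ∀ b : Fin n', x (j + (b:ℤ)) = v b)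
    (hfto : ∀ y : ℤ → B, (X ∩ (appB rp Φp) ⁻¹' {y}).Finite)
    (hY : appB rp Φp '' X = Y)
    (hSX : S ⊆ X) (hSne : S.Nonempty)
    (hYS : Y ⊆ appB rp Φp '' S)
    {Lu : ℕ} {u : Fin Lu → A}
    (huX : ∃ x ∈ X, ∃ k : ℤ, ∀ i : Fin Lu, x (k + (i:ℤ)) = u i)
    (hnoU : ∀ x ∈ S, ∀ k : ℤ, ¬ ∀ i : Fin Lu, x (k + (i:ℤ)) = u i) : False := by
  classical
  set M := N + 2*rf + 1 with hMdef
  set R := M + 2*rf + 2*rp with hRdef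
  obtain ⟨g, hg⟩ := uniform_irr (M := M) (by omega) hX @hirr
  have hch : ∀ {n₁ n₂ : ℕ} (u' : Fin n₁ → A) (v' : Fin n₂ → A),
      (∃ x ∈ X, ∃ k : ℤ, ∀ i : Fin n₁, x (k + (i:ℤ)) = u' i) →
      (∃ x ∈ X, ∃ k : ℤ, ∀ i : Fin n₂, x (k + (i:ℤ)) = v' i) →
      ∃ e : ℕ, ChainW F Φf u' v' e := by
    intro n₁ n₂ u' v' h1 h2
    obtain ⟨e, _, hc⟩ := hg u' v' h1 h2
    exact ⟨e, hc⟩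
  have hLu : 0 < Lu := by
    by_contra hc
    push_neg at hc
    interval_cases Lu
    obtain ⟨x, hx⟩ := hSne
    exact hnoU x hx 0 (fun i => absurd i.2 (by omega))
  set C₁ := (Lu + g + 1) * ((g+1) * (g+1)) with hC₁def
  set K' := Fintype.card ((Fin R → A) × (Fin R → A) ×
    Set ((Fin M → Fin m) × (Fin M → Fin m))) with hK'def
  set KA := Fintype.card (Fin (Lu + 2*g) → A) with hKAdef
  set Q := C₁ * K' * KA with hQdef
  set n := Q + 2*R + 2*rp + 2 with hndef
  set l := n + Lu + 2*g with hldef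
  have h1 : n * wordCard S n ≤ C₁ * wordCard X l :=
    insertion_count hX hSX @hg hLu huX hnoU n
  have h2 : wordCard X l ≤ wordCard Y (l - 2*rp) * K' :=
    xWords_le hX hfto @hch hY (by omega) (by omega) (by omega) (by omega) (by omega)
      (by omega) (by omega)
  have h3 : wordCard Y (l - 2*rp) ≤ wordCard S l :=
    le_trans (yWords_le hYS _) (le_of_eq (congrArg (wordCard S) (by omega)))
  have h5 : wordCard S l ≤ wordCard S n * KA :=
    le_trans (le_of_eq (congrArg (wordCard S) (show l = n + (Lu + 2*g) by omega)))
      (wordCard_le_mul n (Lu + 2*g))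
  have h6 : 0 < wordCard S n := wordCard_pos hSne n
  have chain : n * wordCard S n ≤ Q * wordCard S n := by
    calc n * wordCard S n ≤ C₁ * wordCard X l := h1
      _ ≤ C₁ * (wordCard Y (l - 2*rp) * K') := Nat.mul_le_mul_left _ h2
      _ ≤ C₁ * (wordCard S l * K') :=
          Nat.mul_le_mul_left _ (Nat.mul_le_mul_right _ h3)
      _ ≤ C₁ * ((wordCard S n * KA) * K') :=
          Nat.mul_le_mul_left _ (Nat.mul_le_mul_right _ h5)
      _ = Q * wordCard S n := by rw [hQdef]; ring
  have hle : n ≤ Q := Nat.le_of_mul_le_mul_right chain h6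
  omega

end bigcount
end SBC



/-- Let `X` be an irreducible sofic shift and `π : X → Y` a finite-to-one
factor code. A shift-invariant Borel probability measure `μ` on `X` has full topological
support (on `X`) iff its pushforward `π μ` has full topological support (on `Y`). -/
theorem fullSupport_iff_fullSupport_image
    {A B : Type*} [Fintype A] [Fintype B]
    [TopologicalSpace A] [DiscreteTopology A] [MeasurableSpace A] [BorelSpace A]
    [TopologicalSpace B] [DiscreteTopology B] [MeasurableSpace B] [BorelSpace B]
    (X : Set (ℤ → A)) (Y : Set (ℤ → B)) (π : (ℤ → A) → ℤ → B)
    (hXsofic : IsSofic X) (hXirr : IsIrreducibleShift X)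
    (hfc : IsFactorCodeOn π X Y)
    (hfto : ∀ y : ℤ → B, (X ∩ π ⁻¹' {y}).Finite)
    (μ : Measure (ℤ → A)) [IsProbabilityMeasure μ]
    (hinv : MeasurePreserving shiftMap μ μ) (hX1 : μ X = 1) :
    FullSupportOn μ X ↔ FullSupportOn (μ.map π) Y := by
  classical
  obtain ⟨rp, Φp, hπb⟩ := hfc.1
  have hπfun : π = SBC.appB rp Φp := funext fun x => funext fun i => hπb x i
  have hπcont : Continuous π := by rw [hπfun]; exact SBC.appB_continuous rp Φp
  have hπmeas : Measurable π := hπcont.measurable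
  obtain ⟨mz, Z, φ, hZSFT, hφsbc, hφZ⟩ := hXsofic
  obtain ⟨hZne, Nn, F, hZeq⟩ := hZSFT
  obtain ⟨rf, Φf, hφb⟩ := hφsbc
  have hφfun : φ = SBC.appB rf Φf := funext fun x => funext fun i => hφb x i
  have hZset : Z = {z | SBC.ZIn F z} := by rw [hZeq]; rfl
  have hX : SBC.appB rf Φf '' {z | SBC.ZIn F z} = X := by rw [← hφfun, ← hZset, hφZ]
  have hYeq : SBC.appB rp Φp '' X = Y := by rw [← hπfun, hfc.2]
  have hXclosed : IsClosed X := by rw [← hX]; exact (SBC.ximg_compact (Φf := Φf)).2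
  constructor
  · -- full support downstairs from full support upstairs
    intro hfull U hU hUY
    obtain ⟨y, hyU, hyY⟩ := hUY
    rw [Measure.map_apply hπmeas hU.measurableSet]
    rw [← hfc.2] at hyY
    obtain ⟨x, hxX, hπx⟩ := hyY
    exact hfull (π ⁻¹' U) (hU.preimage hπcont)
      ⟨x, by rw [Set.mem_preimage, hπx]; exact hyU, hxX⟩
  · -- the hard direction
    intro hfully U hU hUX
    by_contra hlt
    have hU0 : μ U = 0 := by simpa using hlt
    obtain ⟨x₀, hx₀U, hx₀X⟩ := hUX
    obtain ⟨I, uo, hIuo, hIsub⟩ := isOpen_pi_iff.mp hU x₀ hx₀U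
    set nb := I.sup Int.natAbs with hnbdef
    set Lu := 2*nb + 1 with hLudef
    set u : Fin Lu → A := fun i => x₀ (-(nb:ℤ) + (i:ℤ)) with hudef
    set Cyl : ℤ → Set (ℤ → A) := fun k => {z | ∀ i : Fin Lu, z (k + (i:ℤ)) = u i} with hCyl
    have hCylOpen : ∀ k, IsOpen (Cyl k) := by
      intro k
      have he : Cyl k = ⋂ i : Fin Lu, (fun z : ℤ → A => z (k + (i:ℤ))) ⁻¹' {u i} := by
        ext z
        simp only [hCyl, Set.mem_iInter, Set.mem_preimage, Set.mem_singleton_iff,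
          Set.mem_setOf_eq]
      rw [he]
      exact isOpen_iInter_of_finite fun i =>
        (continuous_apply _).isOpen_preimage _ (isOpen_discrete _)
    have hCsub : Cyl (-(nb:ℤ)) ⊆ U := by
      intro z hz
      apply hIsub
      intro a haI
      have hab : a.natAbs ≤ nb := Finset.le_sup haI
      have hidx : (a + (nb:ℤ)).toNat < Lu := by omega
      have hza := hz ⟨(a + (nb:ℤ)).toNat, hidx⟩
      simp only [Fin.val_mk] at hza
      rw [show -(nb:ℤ) + ((((a + (nb:ℤ)).toNat : ℕ)):ℤ) = a by omega] at hza
      rw [hza]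
      show x₀ (-(nb:ℤ) + ((((a + (nb:ℤ)).toNat : ℕ)):ℤ)) ∈ uo a
      rw [show -(nb:ℤ) + ((((a + (nb:ℤ)).toNat : ℕ)):ℤ) = a by omega]
      exact (hIuo a haI).2
    have hμC : μ (Cyl (-(nb:ℤ))) = 0 :=
      le_antisymm (le_trans (measure_mono hCsub) (le_of_eq hU0)) zero_le
    -- the shift by any integer preserves μ
    have hshift_iter : ∀ t : ℕ, (shiftMap^[t] : (ℤ → A) → ℤ → A) = SBC.shiftBy (t:ℤ) := by
      intro t
      induction t with
      | zero => funext x i; show x i = x (i + 0); rw [add_zero]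
      | succ t ih =>
        funext x i
        rw [Function.iterate_succ_apply', ih]
        show (SBC.shiftBy (t:ℤ) x) (i + 1) = x (i + ((t:ℕ)+1 : ℕ))
        show x (i + 1 + (t:ℤ)) = x (i + ((t:ℕ)+1 : ℕ))
        congr 1
        push_cast
        ring
    have hshiftinv_iter : ∀ t : ℕ, (shiftInvMap^[t] : (ℤ → A) → ℤ → A) =
        SBC.shiftBy (-(t:ℤ)) := by
      intro t
      induction t with
      | zero => funext x i; show x i = x (i + -0); rw [neg_zero, add_zero]
      | succ t ih =>
        funext x i
        rw [Function.iterate_succ_apply', ih]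
        show (SBC.shiftBy (-(t:ℤ)) x) (i - 1) = x (i + -((t:ℕ)+1 : ℕ))
        show x (i - 1 + -(t:ℤ)) = x (i + -((t:ℕ)+1 : ℕ))
        congr 1
        push_cast
        ring
    have hcontshift : Continuous (shiftMap : (ℤ → A) → ℤ → A) :=
      continuous_pi fun i => continuous_apply _
    have hcontshiftinv : Continuous (shiftInvMap : (ℤ → A) → ℤ → A) :=
      continuous_pi fun i => continuous_apply _
    set e : (ℤ → A) ≃ᵐ (ℤ → A) :=
      ⟨⟨shiftMap, shiftInvMap,
        fun x => funext fun i => by show x (i - 1 + 1) = x i; congr 1; ring,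
        fun x => funext fun i => by show x (i + 1 - 1) = x i; congr 1; ring⟩,
        hcontshift.measurable, hcontshiftinv.measurable⟩ with hedef
    have hMPinv : MeasurePreserving (shiftInvMap : (ℤ → A) → ℤ → A) μ μ :=
      MeasurePreserving.symm e hinv
    have hMPby : ∀ k : ℤ, MeasurePreserving (SBC.shiftBy k : (ℤ → A) → ℤ → A) μ μ := by
      intro k
      cases k with
      | ofNat t =>
        have : ((Int.ofNat t) : ℤ) = ((t:ℕ):ℤ) := rfl
        rw [this, ← hshift_iter t]
        exact hinv.iterate t
      | negSucc t =>
        have : (Int.negSucc t) = -(((t+1 : ℕ)):ℤ) := by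
          rw [Int.negSucc_eq]; push_cast; ring
        rw [this, ← hshiftinv_iter (t+1)]
        exact hMPinv.iterate (t+1)
    have hCylk : ∀ k : ℤ, Cyl k = SBC.shiftBy k ⁻¹' (Cyl 0) := by
      intro k
      ext z
      simp only [hCyl, Set.mem_preimage, Set.mem_setOf_eq]
      refine forall_congr' fun i => ?_
      show z (k + (i:ℤ)) = u i ↔ (SBC.shiftBy k z) (0 + (i:ℤ)) = u i
      show z (k + (i:ℤ)) = u i ↔ z (0 + (i:ℤ) + k) = u i
      rw [show (0:ℤ) + (i:ℤ) + k = k + (i:ℤ) by ring]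
    have hμCylk : ∀ k : ℤ, μ (Cyl k) = μ (Cyl 0) := by
      intro k
      rw [hCylk k]
      exact (hMPby k).measure_preimage (hCylOpen 0).measurableSet.nullMeasurableSet
    have hμC0 : μ (Cyl 0) = 0 := by rw [← hμCylk (-(nb:ℤ))]; exact hμC
    set D := ⋃ k : ℤ, Cyl k with hDdef
    have hμD : μ D = 0 := measure_iUnion_null fun k => by rw [hμCylk k]; exact hμC0
    have hDopen : IsOpen D := isOpen_iUnion hCylOpen
    set S := X \ D with hSdef
    have hSX : S ⊆ X := Set.diff_subset
    have hSclosed : IsClosed S := hXclosed.sdiff hDopen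
    have hμS : μ S = 1 := by rw [hSdef, measure_diff_null hμD]; exact hX1
    have hSne : S.Nonempty := by
      by_contra hc
      rw [Set.not_nonempty_iff_eq_empty] at hc
      rw [hc] at hμS
      simp at hμS
    have hnoU : ∀ x ∈ S, ∀ k : ℤ, ¬ ∀ i : Fin Lu, x (k + (i:ℤ)) = u i := by
      intro x hx k hk
      exact hx.2 (Set.mem_iUnion.mpr ⟨k, hk⟩)
    have huX : ∃ x ∈ X, ∃ k : ℤ, ∀ i : Fin Lu, x (k + (i:ℤ)) = u i :=
      ⟨x₀, hx₀X, -(nb:ℤ), fun i => rfl⟩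
    have hScomp : IsCompact S := hSclosed.isCompact
    have hπSclosed : IsClosed (π '' S) := (hScomp.image hπcont).isClosed
    have hνSc : (μ.map π) ((π '' S)ᶜ) = 0 := by
      rw [Measure.map_apply hπmeas hπSclosed.measurableSet.compl]
      have hsub : π ⁻¹' (π '' S)ᶜ ⊆ Sᶜ :=
        fun x hxmem hxS => hxmem (Set.mem_image_of_mem π hxS)
      refine le_antisymm (le_trans (measure_mono hsub) ?_) zero_le
      rw [measure_compl hSclosed.measurableSet (measure_ne_top μ S), hμS]
      simp
    have hYS : Y ⊆ π '' S := by
      by_contra hc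
      rw [Set.not_subset] at hc
      obtain ⟨y, hyY, hynot⟩ := hc
      have := hfully ((π '' S)ᶜ) hπSclosed.isOpen_compl ⟨y, hynot, hyY⟩
      rw [hνSc] at this
      exact lt_irrefl _ this
    rw [hπfun] at hYS hfto
    exact SBC.no_small_support hX (fun u v h1 h2 => hXirr u v h1 h2) hfto hYeq hSX hSne
      hYS huX hnoU
end

section
/- Let X be an irreducible sofic shift, π: X → Y a finite-to-one factor code of degree d_π, and ν a fully supported ergodic shift-invariant measure on Y. If λ and λ' are two degree joinings over ν, then there is a permutation f of {1,…,d_π} such that λ' = p_f λ, where p_f: X^{d_π} → X^{d_π} sends (x₁,…,x_{d_π}) to (x_{f(1)},…,x_{f(d_π)}). -/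
open MeasureTheory Set Filter Topology
open scoped ENNReal NNReal

variable {A B : Type*} [Fintype A] [Fintype B]
  [TopologicalSpace A] [DiscreteTopology A] [MeasurableSpace A] [BorelSpace A]
  [TopologicalSpace B] [DiscreteTopology B] [MeasurableSpace B] [BorelSpace B]

section Aux1

lemma shiftInv_shift {A : Type*} (x : ℤ → A) : shiftInvMap (shiftMap x) = x := by
  funext i; simp [shiftMap, shiftInvMap]

lemma shift_shiftInv {A : Type*} (x : ℤ → A) : shiftMap (shiftInvMap x) = x := by
  funext i; simp [shiftMap, shiftInvMap]

lemma measurable_shiftMap {A : Type*} [MeasurableSpace A] : Measurable (shiftMap (A := A)) :=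
  measurable_pi_lambda _ fun i => measurable_pi_apply (i + 1)

lemma measurable_shiftInvMap {A : Type*} [MeasurableSpace A] : Measurable (shiftInvMap (A := A)) :=
  measurable_pi_lambda _ fun i => measurable_pi_apply (i - 1)

lemma measurable_prodShift {A : Type*} [MeasurableSpace A] {n : ℕ} :
    Measurable (prodShift (A := A) (n := n)) :=
  measurable_pi_lambda _ fun i => measurable_shiftMap.comp (measurable_pi_apply i)

lemma IsSlidingBlockCode.continuous {A B : Type*} [TopologicalSpace A] [DiscreteTopology A]
    [TopologicalSpace B] {π : (ℤ → A) → ℤ → B} (h : IsSlidingBlockCode π) : Continuous π := by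
  obtain ⟨r, Φ, hΦ⟩ := h
  have : π = fun x i => Φ fun j => x (i + (j : ℤ) - (r : ℤ)) := by
    funext x i; exact hΦ x i
  rw [this]
  refine continuous_pi fun i => ?_
  exact Continuous.comp continuous_of_discreteTopology
    (continuous_pi fun j => continuous_apply _)

lemma IsSofic.isCompact {A : Type*} [TopologicalSpace A] [DiscreteTopology A]
    {X : Set (ℤ → A)} (h : IsSofic X) : IsCompact X := by
  obtain ⟨m, Z, φ, hZ, hφ, him⟩ := h
  letI : TopologicalSpace (Fin m) := ⊥
  haveI : DiscreteTopology (Fin m) := ⟨rfl⟩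
  obtain ⟨-, N, F, hset⟩ := hZ
  have hZc : IsClosed Z := by
    rw [hset]
    have : {x : ℤ → Fin m | ∀ k : ℤ, (fun i : Fin N => x (k + (i : ℤ))) ∉ F} =
        ⋂ k : ℤ, (fun (x : ℤ → Fin m) (i : Fin N) => x (k + (i : ℤ))) ⁻¹' Fᶜ := by
      ext x; simp [Set.mem_iInter]
    rw [this]
    refine isClosed_iInter fun k => IsClosed.preimage ?_ (isClosed_discrete _)
    exact continuous_pi fun j => continuous_apply _
  have hcomp : IsCompact Z := hZc.isCompact
  rw [← him]
  exact hcomp.image hφ.continuous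

end Aux1

section Aux2
variable {B : Type*} [Fintype B] [TopologicalSpace B] [DiscreteTopology B]
  [MeasurableSpace B] [BorelSpace B]

lemma ae_doublyTransitive (Y : Set (ℤ → B)) (hYm : MeasurableSet Y)
    (ν : Measure (ℤ → B)) [IsProbabilityMeasure ν]
    (hνerg : Ergodic shiftMap ν) (hνY : ν Y = 1) (hνfull : FullSupportOn ν Y) :
    ∃ D : Set (ℤ → B), MeasurableSet D ∧ ν D = 1 ∧ ∀ y ∈ D, DoublyTransitiveIn Y y := by
  obtain ⟨b, bct, -, hbasis⟩ := TopologicalSpace.exists_countable_basis (ℤ → B)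
  set b' : Set (Set (ℤ → B)) := {U ∈ b | (U ∩ Y).Nonempty} with hb'
  have hb'ct : b'.Countable := bct.mono (sep_subset _ _)
  set Fwd : Set (ℤ → B) → Set (ℤ → B) := fun U => ⋃ n : ℕ, shiftMap^[n] ⁻¹' U with hFwd
  set Bwd : Set (ℤ → B) → Set (ℤ → B) := fun U => ⋃ n : ℕ, shiftInvMap^[n] ⁻¹' U with hBwd
  have hUm : ∀ U ∈ b', MeasurableSet U := fun U hU =>
    (hbasis.isOpen hU.1).measurableSet
  have hFm : ∀ U ∈ b', MeasurableSet (Fwd U) := fun U hU =>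
    MeasurableSet.iUnion fun n => (hUm U hU).preimage (measurable_shiftMap.iterate n)
  have hBm : ∀ U ∈ b', MeasurableSet (Bwd U) := fun U hU =>
    MeasurableSet.iUnion fun n => (hUm U hU).preimage (measurable_shiftInvMap.iterate n)
  have hUsubF : ∀ U, U ⊆ Fwd U := fun U x hx =>
    Set.mem_iUnion.mpr ⟨0, by simpa using hx⟩
  have hUsubB : ∀ U, U ⊆ Bwd U := fun U x hx =>
    Set.mem_iUnion.mpr ⟨0, by simpa using hx⟩
  have hpos : ∀ U ∈ b', 0 < ν U := fun U hU => hνfull U (hbasis.isOpen hU.1) hU.2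
  -- forward full measure
  have hF1 : ∀ U ∈ b', ν (Fwd U) = 1 := by
    intro U hU
    have hsub : shiftMap ⁻¹' Fwd U ⊆ Fwd U := by
      rw [hFwd]
      simp only [Set.preimage_iUnion]
      refine Set.iUnion_subset fun n => ?_
      have : shiftMap ⁻¹' (shiftMap^[n] ⁻¹' U) = shiftMap^[n + 1] ⁻¹' U := by
        rw [Function.iterate_succ]; rfl
      rw [this]
      exact Set.subset_iUnion (fun n => shiftMap^[n] ⁻¹' U) (n + 1)
    rcases hνerg.ae_empty_or_univ_of_preimage_ae_le' (hFm U hU).nullMeasurableSet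
        hsub.eventuallyLE (measure_ne_top ν _) with h0 | h1
    · exfalso
      have h0' : ν (Fwd U) = 0 := by simpa using measure_congr h0
      have : ν U ≤ ν (Fwd U) := measure_mono (hUsubF U)
      rw [h0'] at this
      exact (hpos U hU).ne' (le_antisymm this (zero_le))
    · simpa using measure_congr h1
  -- backward full measure
  have hB1 : ∀ U ∈ b', ν (Bwd U) = 1 := by
    intro U hU
    have hsub : Bwd U ⊆ shiftMap ⁻¹' Bwd U := by
      intro x hx
      rw [hBwd] at hx ⊢
      simp only [Set.mem_iUnion, Set.mem_preimage] at hx ⊢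
      obtain ⟨n, hn⟩ := hx
      refine ⟨n + 1, ?_⟩
      rw [Function.iterate_succ, Function.comp_apply, shiftInv_shift]
      exact hn
    rcases hνerg.ae_empty_or_univ_of_ae_le_preimage' (hBm U hU).nullMeasurableSet
        hsub.eventuallyLE (measure_ne_top ν _) with h0 | h1
    · exfalso
      have h0' : ν (Bwd U) = 0 := by simpa using measure_congr h0
      have : ν U ≤ ν (Bwd U) := measure_mono (hUsubB U)
      rw [h0'] at this
      exact (hpos U hU).ne' (le_antisymm this (zero_le))
    · simpa using measure_congr h1
  refine ⟨Y ∩ ⋂ U ∈ b', (Fwd U ∩ Bwd U), ?_, ?_, ?_⟩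
  · exact hYm.inter (MeasurableSet.biInter hb'ct fun U hU => (hFm U hU).inter (hBm U hU))
  · rw [← prob_compl_eq_zero_iff
      (hYm.inter (MeasurableSet.biInter hb'ct fun U hU => (hFm U hU).inter (hBm U hU)))]
    rw [Set.compl_inter]
    refine measure_union_null ((prob_compl_eq_zero_iff hYm).mpr hνY) ?_
    rw [Set.compl_iInter₂]
    refine (measure_biUnion_null_iff hb'ct).mpr fun U hU => ?_
    rw [Set.compl_inter]
    refine measure_union_null ?_ ?_
    · exact (prob_compl_eq_zero_iff (hFm U hU)).mpr (hF1 U hU)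
    · exact (prob_compl_eq_zero_iff (hBm U hU)).mpr (hB1 U hU)
  · rintro y ⟨hyY, hy⟩
    simp only [Set.mem_iInter] at hy
    refine ⟨hyY, ?_, ?_⟩
    · intro z hz
      rw [mem_closure_iff]
      intro V hV hzV
      obtain ⟨U, hUb, hzU, hUV⟩ := hbasis.exists_subset_of_mem_open hzV hV
      have hUb' : U ∈ b' := ⟨hUb, ⟨z, hzU, hz⟩⟩
      obtain ⟨n, hn⟩ := Set.mem_iUnion.mp (hy U hUb').1
      exact ⟨shiftMap^[n] y, hUV hn, ⟨n, rfl⟩⟩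
    · intro z hz
      rw [mem_closure_iff]
      intro V hV hzV
      obtain ⟨U, hUb, hzU, hUV⟩ := hbasis.exists_subset_of_mem_open hzV hV
      have hUb' : U ∈ b' := ⟨hUb, ⟨z, hzU, hz⟩⟩
      obtain ⟨n, hn⟩ := Set.mem_iUnion.mp (hy U hUb').2
      exact ⟨shiftInvMap^[n] y, hUV hn, ⟨n, rfl⟩⟩

end Aux2

set_option linter.unusedSectionVars false
section Sorting
open Function
variable {α : Type*} [MeasurableSpace α] {d : ℕ}

noncomputable def sortMap (θ : α → ℝ) (d : ℕ) : (Fin d → α) → (Fin d → α) := fun x =>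
  if h : ∃ g : Equiv.Perm (Fin d), StrictMono (fun i => θ (x (g i))) then
    fun i => x (h.choose i) else x

lemma sort_unique {θ : α → ℝ} (hθ : Injective θ) {x : Fin d → α} (hx : Injective x)
    {g g' : Equiv.Perm (Fin d)} (hg : StrictMono (fun i => θ (x (g i))))
    (hg' : StrictMono (fun i => θ (x (g' i)))) : g = g' := by
  haveI : WellFoundedLT (Fin d) := Finite.to_wellFoundedLT
  have hr : range (fun i => θ (x (g i))) = range (fun i => θ (x (g' i))) := by
    have h1 : (fun i => θ (x (g i))) = (θ ∘ x) ∘ g := rfl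
    have h2 : (fun i => θ (x (g' i))) = (θ ∘ x) ∘ g' := rfl
    rw [h1, h2, Set.range_comp, Set.range_comp, g.surjective.range_eq, g'.surjective.range_eq]
  have h := (hg.range_inj hg').mp hr
  exact Equiv.ext fun i => hx (hθ (congrFun h i))

lemma sortMap_spec {θ : α → ℝ} (hθ : Injective θ) {x : Fin d → α} (hx : Injective x) :
    ∃ g : Equiv.Perm (Fin d), sortMap θ d x = (fun i => x (g i)) ∧
      StrictMono (fun i => θ (x (g i))) := by
  have hex : ∃ g : Equiv.Perm (Fin d), StrictMono (fun i => θ (x (g i))) := by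
    refine ⟨Tuple.sort (fun i => θ (x i)), ?_⟩
    have hmono : Monotone ((fun i => θ (x i)) ∘ Tuple.sort (fun i => θ (x i))) :=
      Tuple.monotone_sort _
    exact hmono.strictMono_of_injective ((hθ.comp hx).comp (Equiv.injective _))
  refine ⟨hex.choose, ?_, hex.choose_spec⟩
  rw [sortMap, dif_pos hex]

lemma sortMap_injective_of_ex {θ : α → ℝ} {x : Fin d → α}
    (hex : ∃ g : Equiv.Perm (Fin d), StrictMono (fun i => θ (x (g i)))) : Injective x := by
  obtain ⟨g, hg⟩ := hex
  intro i j hij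
  by_contra hne
  have : g.symm i ≠ g.symm j := fun h => hne (by simpa using congrArg g h)
  rcases this.lt_or_gt with h | h
  · exact absurd (congrArg θ (by simpa using hij)) (hg h).ne
  · exact absurd (congrArg θ (by simp [hij])) (hg h).ne'

lemma measurable_sortMap {θ : α → ℝ} (hθm : Measurable θ) (hθ : Injective θ) :
    Measurable (sortMap θ d) := by
  intro t ht
  classical
  set S : Equiv.Perm (Fin d) → Set (Fin d → α) :=
    fun g => {x | StrictMono (fun i => θ (x (g i)))} with hS
  have hSm : ∀ g, MeasurableSet (S g) := by
    intro g
    have : S g = ⋂ (i : Fin d), ⋂ (j : Fin d), ⋂ (_ : i < j),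
        {x : Fin d → α | θ (x (g i)) < θ (x (g j))} := by
      ext x
      simp only [hS, Set.mem_setOf_eq, Set.mem_iInter]
      exact ⟨fun h i j hij => h hij, fun h => fun i j hij => h i j hij⟩
    rw [this]
    refine MeasurableSet.iInter fun i => MeasurableSet.iInter fun j =>
      MeasurableSet.iInter fun _ => ?_
    exact measurableSet_lt (hθm.comp (measurable_pi_apply _)) (hθm.comp (measurable_pi_apply _))
  have hkey : sortMap θ d ⁻¹' t =
      ((⋃ g, S g)ᶜ ∩ t) ∪ ⋃ g, (S g ∩ (fun (x : Fin d → α) i => x (g i)) ⁻¹' t) := by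
    ext x
    by_cases hex : ∃ g : Equiv.Perm (Fin d), StrictMono (fun i => θ (x (g i)))
    · have hx : Injective x := sortMap_injective_of_ex hex
      have hval : sortMap θ d x = fun i => x (hex.choose i) := by rw [sortMap, dif_pos hex]
      constructor
      · intro hmem
        refine Or.inr (Set.mem_iUnion.mpr ⟨hex.choose, hex.choose_spec, ?_⟩)
        have : sortMap θ d x ∈ t := hmem
        rw [hval] at this
        exact this
      · rintro (⟨hno, -⟩ | hmem)
        · exact absurd (Set.mem_iUnion.mpr ⟨hex.choose, hex.choose_spec⟩) hno
        · obtain ⟨g, hg, hgt⟩ := Set.mem_iUnion.mp hmem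
          have hgc : g = hex.choose := sort_unique hθ hx hg hex.choose_spec
          have : (fun i => x (g i)) ∈ t := hgt
          rw [hgc] at this
          show sortMap θ d x ∈ t
          rw [hval]
          exact this
    · have hval : sortMap θ d x = x := by rw [sortMap, dif_neg hex]
      constructor
      · intro hmem
        rw [Set.mem_preimage, hval] at hmem
        exact Or.inl ⟨fun hm => by obtain ⟨g, hg⟩ := Set.mem_iUnion.mp hm; exact hex ⟨g, hg⟩, hmem⟩
      · rintro (⟨-, hmem⟩ | hmem)
        · rw [Set.mem_preimage, hval]; exact hmem
        · obtain ⟨g, hg, -⟩ := Set.mem_iUnion.mp hmem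
          exact absurd ⟨g, hg⟩ hex
  rw [hkey]
  have hPm : ∀ g : Equiv.Perm (Fin d), Measurable (fun (x : Fin d → α) i => x (g i)) :=
    fun g => measurable_pi_lambda _ fun i => measurable_pi_apply _
  exact (((MeasurableSet.iUnion hSm).compl.inter ht).union
    (MeasurableSet.iUnion fun g => (hSm g).inter (hPm g ht)))

end Sorting

section ErgMeas
variable {α : Type*} [MeasurableSpace α] {T T' : α → α}

lemma rnDeriv_comp_ae_eq (hT : Measurable T) (hT' : Measurable T') (hid : T' ∘ T = id)
    (μ σ : Measure α) [IsFiniteMeasure μ] [IsFiniteMeasure σ] (hac : μ ≪ σ)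
    (hσ : MeasurePreserving T σ σ) (hμ : MeasurePreserving T μ μ) :
    (fun x => μ.rnDeriv σ (T x)) =ᵐ[σ] μ.rnDeriv σ := by
  have hf : Measurable (μ.rnDeriv σ) := Measure.measurable_rnDeriv μ σ
  refine ae_eq_of_forall_setLIntegral_eq_of_sigmaFinite (hf.comp hT) hf fun E hE _ => ?_
  have hTT : ∀ x, T' (T x) = x := fun x => congrFun hid x
  have hpre : T ⁻¹' (T' ⁻¹' E) = E := by
    ext x; simp [Set.mem_preimage, hTT x]
  have h1 : ∫⁻ x in E, μ.rnDeriv σ (T x) ∂σ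
      = ∫⁻ x, (T' ⁻¹' E).indicator (μ.rnDeriv σ) (T x) ∂σ := by
    rw [← lintegral_indicator hE]
    congr 1
    funext x
    by_cases hx : x ∈ E
    · rw [Set.indicator_of_mem hx, Set.indicator_of_mem (by simpa [hTT x] using hx)]
    · rw [Set.indicator_of_notMem hx, Set.indicator_of_notMem (by simpa [hTT x] using hx)]
  rw [h1, hσ.lintegral_comp (hf.indicator (hE.preimage hT')),
    lintegral_indicator (hE.preimage hT'),
    Measure.setLIntegral_rnDeriv hac, Measure.setLIntegral_rnDeriv hac]
  conv_rhs => rw [← hpre]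
  exact (hμ.measure_preimage (hE.preimage hT').nullMeasurableSet).symm

lemma eq_of_absolutelyContinuous_ergodic (hT : Measurable T) (hT' : Measurable T')
    (hid : T' ∘ T = id) (μ ρ : Measure α) [IsProbabilityMeasure μ] [IsProbabilityMeasure ρ]
    (hμ : Ergodic T μ) (hρ : MeasurePreserving T ρ ρ) (hac : ρ ≪ μ) : ρ = μ := by
  set h := ρ.rnDeriv μ with hh
  have hhm : Measurable h := Measure.measurable_rnDeriv ρ μ
  have hinv : (fun x => h (T x)) =ᵐ[μ] h :=
    rnDeriv_comp_ae_eq hT hT' hid ρ μ hac hμ.toMeasurePreserving hρ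
  set C : Set α := {x | 1 < h x} with hC
  have hCm : MeasurableSet C := measurableSet_lt measurable_const hhm
  have hae : T ⁻¹' C =ᵐ[μ] C := by
    rw [Filter.eventuallyEq_set]
    filter_upwards [hinv] with x hx
    simp [hC, Set.mem_preimage, hx]
  rcases hμ.quasiErgodic.ae_empty_or_univ₀ hCm.nullMeasurableSet hae with h0 | h1
  · -- h ≤ 1 a.e., so ρ ≤ μ hence ρ = μ
    have hC0 : μ C = 0 := by simpa using measure_congr h0
    have hle1 : ∀ᵐ x ∂μ, h x ≤ 1 := by
      have : ∀ᵐ x ∂μ, x ∉ C := measure_eq_zero_iff_ae_notMem.mp hC0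
      filter_upwards [this] with x hx
      exact not_lt.mp hx
    have hle : ∀ E : Set α, MeasurableSet E → ρ E ≤ μ E := by
      intro E hE
      rw [← Measure.setLIntegral_rnDeriv hac E]
      calc ∫⁻ x in E, h x ∂μ ≤ ∫⁻ _x in E, 1 ∂μ :=
            lintegral_mono_ae (ae_restrict_of_ae hle1)
        _ = μ E := by simp
    ext E hE
    have h1 := hle E hE
    have h2 := hle Eᶜ hE.compl
    have hρE : ρ Eᶜ = 1 - ρ E := prob_compl_eq_one_sub hE
    have hμE : μ Eᶜ = 1 - μ E := prob_compl_eq_one_sub hE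
    rw [hρE, hμE] at h2
    have hμle : μ E ≤ ρ E := by
      have := tsub_le_tsub_left h1 (1 : ℝ≥0∞)  -- 1 - ρ E ≥ 1 - μ E
      have h3 : 1 - (1 - μ E) ≤ 1 - (1 - ρ E) := tsub_le_tsub_left h2 1
      rwa [ENNReal.sub_sub_cancel ENNReal.one_ne_top prob_le_one,
        ENNReal.sub_sub_cancel ENNReal.one_ne_top prob_le_one] at h3
    exact le_antisymm h1 hμle
  · -- μ C = 1, contradiction
    exfalso
    have hC1 : μ C = 1 := by
      have := measure_congr h1
      simpa using this
    set Cn : ℕ → Set α := fun n => {x | 1 + ((n : ℝ≥0∞) + 1)⁻¹ ≤ h x} with hCn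
    have hCnm : ∀ n, MeasurableSet (Cn n) := fun n => measurableSet_le measurable_const hhm
    have hCun : C = ⋃ n, Cn n := by
      ext x
      simp only [hC, hCn, Set.mem_setOf_eq, Set.mem_iUnion]
      constructor
      · intro hx
        rcases eq_or_ne (h x) ∞ with htop | htop
        · exact ⟨0, by rw [htop]; exact le_top⟩
        · have hpos : h x - 1 ≠ 0 := by
            simpa [tsub_eq_zero_iff_le] using not_le.mpr hx
          obtain ⟨n, hn⟩ := ENNReal.exists_inv_nat_lt hpos
          refine ⟨n, ?_⟩
          have hn' : ((n : ℝ≥0∞) + 1)⁻¹ ≤ h x - 1 := by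
            refine le_trans ?_ hn.le
            exact ENNReal.inv_le_inv.mpr (by simp)
          calc 1 + ((n : ℝ≥0∞) + 1)⁻¹ ≤ 1 + (h x - 1) := by gcongr
            _ = h x := by rw [add_tsub_cancel_of_le hx.le]
      · rintro ⟨n, hn⟩
        have : (1 : ℝ≥0∞) < 1 + ((n : ℝ≥0∞) + 1)⁻¹ :=
          ENNReal.lt_add_right ENNReal.one_ne_top (by simp)
        exact lt_of_lt_of_le this hn
    have hex : ∃ n, μ (Cn n) ≠ 0 := by
      by_contra hall
      push_neg at hall
      have : μ C = 0 := by
        rw [hCun]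
        exact measure_iUnion_null hall
      rw [hC1] at this
      exact one_ne_zero this
    obtain ⟨n, hn⟩ := hex
    set ε : ℝ≥0∞ := ((n : ℝ≥0∞) + 1)⁻¹ with hε
    have hρuniv : (1 : ℝ≥0∞) = ∫⁻ x, h x ∂μ := by
      rw [Measure.lintegral_rnDeriv hac]
      simp
    have hsub : Cn n ⊆ C := by
      rw [hCun]; exact Set.subset_iUnion Cn n
    have hbound : 1 + ε * μ (Cn n) ≤ ∫⁻ x, h x ∂μ := by
      have hsplit : ∫⁻ x, h x ∂μ ≥ ∫⁻ x in C, h x ∂μ := setLIntegral_le_lintegral _ _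
      have hCsplit : ∫⁻ x in C, h x ∂μ
          = ∫⁻ x in Cn n, h x ∂μ + ∫⁻ x in C \ Cn n, h x ∂μ := by
        rw [← lintegral_union ((hCm.diff (hCnm n))) disjoint_sdiff_right,
          Set.union_diff_cancel hsub]
      have hb1 : (1 + ε) * μ (Cn n) ≤ ∫⁻ x in Cn n, h x ∂μ := by
        calc (1 + ε) * μ (Cn n) = ∫⁻ _x in Cn n, (1 + ε) ∂μ := by simp [mul_comm]
          _ ≤ ∫⁻ x in Cn n, h x ∂μ := setLIntegral_mono hhm fun x hx => hx
      have hb2 : 1 * μ (C \ Cn n) ≤ ∫⁻ x in C \ Cn n, h x ∂μ := by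
        calc 1 * μ (C \ Cn n) = ∫⁻ _x in C \ Cn n, 1 ∂μ := by simp [mul_comm]
          _ ≤ ∫⁻ x in C \ Cn n, h x ∂μ :=
            setLIntegral_mono hhm fun x hx => hx.1.le
      have hmeas : μ (Cn n) + μ (C \ Cn n) = μ C := by
        rw [← measure_union disjoint_sdiff_right (hCm.diff (hCnm n)),
          Set.union_diff_cancel hsub]
      calc 1 + ε * μ (Cn n) = μ C + ε * μ (Cn n) := by rw [hC1]
        _ = μ (Cn n) + μ (C \ Cn n) + ε * μ (Cn n) := by rw [hmeas]
        _ = (1 + ε) * μ (Cn n) + 1 * μ (C \ Cn n) := by ring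
        _ ≤ ∫⁻ x in Cn n, h x ∂μ + ∫⁻ x in C \ Cn n, h x ∂μ := add_le_add hb1 hb2
        _ = ∫⁻ x in C, h x ∂μ := hCsplit.symm
        _ ≤ ∫⁻ x, h x ∂μ := hsplit
    rw [← hρuniv] at hbound
    have : ε * μ (Cn n) ≤ 0 := by
      have := hbound
      rwa [← add_zero (1 : ℝ≥0∞), add_assoc, zero_add,
        ENNReal.add_le_add_iff_left ENNReal.one_ne_top] at this
    have hne : ε * μ (Cn n) ≠ 0 := by
      simp only [hε, ne_eq, mul_eq_zero, not_or]
      exact ⟨by simp, hn⟩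
    exact hne (le_antisymm this (zero_le))

lemma ergodic_eq_or_mutuallySingular (hT : Measurable T) (hT' : Measurable T')
    (hid : T' ∘ T = id) (μ ρ : Measure α) [IsProbabilityMeasure μ] [IsProbabilityMeasure ρ]
    (hμ : Ergodic T μ) (hρ : Ergodic T ρ) : μ = ρ ∨ Measure.MutuallySingular μ ρ := by
  set σ : Measure α := μ + ρ with hσ
  haveI : IsFiniteMeasure σ := by rw [hσ]; infer_instance
  have hσT : MeasurePreserving T σ σ := by
    constructor
    · exact hT
    · rw [hσ, Measure.map_add _ _ hT, hμ.toMeasurePreserving.map_eq, hρ.toMeasurePreserving.map_eq]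
  have hacμ : μ ≪ σ := by
    rw [hσ]; exact Measure.absolutelyContinuous_of_le (Measure.le_add_right le_rfl)
  have hacρ : ρ ≪ σ := by
    rw [hσ]; exact Measure.absolutelyContinuous_of_le (Measure.le_add_left le_rfl)
  set f := μ.rnDeriv σ with hf
  have hfm : Measurable f := Measure.measurable_rnDeriv μ σ
  have hinv : (fun x => f (T x)) =ᵐ[σ] f :=
    rnDeriv_comp_ae_eq hT hT' hid μ σ hacμ hσT hμ.toMeasurePreserving
  set A : Set α := {x | f x = 0} with hA
  have hAm : MeasurableSet A := hfm (measurableSet_singleton 0)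
  have hμA : μ A = 0 := by
    rw [← Measure.setLIntegral_rnDeriv hacμ A]
    rw [setLIntegral_congr_fun hAm (show EqOn f (fun _ => 0) A from fun x hx => hx)]
    simp
  have haeρ : T ⁻¹' A =ᵐ[ρ] A := by
    have : (fun x => f (T x)) =ᵐ[ρ] f := hacρ.ae_eq hinv
    rw [Filter.eventuallyEq_set]
    filter_upwards [this] with x hx
    simp [hA, Set.mem_preimage, hx]
  rcases hρ.quasiErgodic.ae_empty_or_univ₀ hAm.nullMeasurableSet haeρ with h0 | h1
  · -- ρ A = 0 : show ρ ≪ μ, conclude equality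
    left
    have hρA : ρ A = 0 := by simpa using measure_congr h0
    have hrac : ρ ≪ μ := by
      intro E hE
      obtain ⟨E', hEE', hE'm, hE'0⟩ := exists_measurable_superset_of_null hE
      refine measure_mono_null hEE' ?_
      have hint : ∫⁻ x in E', f x ∂σ = 0 := by
        rw [Measure.setLIntegral_rnDeriv hacμ]; exact hE'0
      have hfz : σ (E' ∩ {x | f x ≠ 0}) = 0 := by
        have hae := (setLIntegral_eq_zero_iff hE'm hfm).mp hint
        have h0' : σ {x | ¬(x ∈ E' → f x = 0)} = 0 := ae_iff.mp hae
        refine measure_mono_null ?_ h0'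
        intro x hx
        simp only [Set.mem_setOf_eq]
        exact fun h => hx.2 (h hx.1)
      have hdiff : ρ (E' \ A) = 0 := by
        have hsub : E' \ A ⊆ E' ∩ {x | f x ≠ 0} := fun x hx => ⟨hx.1, hx.2⟩
        have := measure_mono_null hsub hfz
        exact measure_mono_null hsub (by
          refine le_antisymm ?_ (zero_le)
          calc ρ (E' ∩ {x | f x ≠ 0}) ≤ σ (E' ∩ {x | f x ≠ 0}) :=
                Measure.le_iff'.mp (Measure.le_add_left le_rfl) _
            _ = 0 := hfz)
      refine le_antisymm ?_ (zero_le)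
      calc ρ E' = ρ ((E' \ A) ∪ (E' ∩ A)) := by rw [Set.diff_union_inter E' A]
        _ ≤ ρ (E' \ A) + ρ (E' ∩ A) := measure_union_le _ _
        _ ≤ 0 + ρ A := add_le_add hdiff.le (measure_mono Set.inter_subset_right)
        _ = 0 := by rw [hρA, zero_add]
    exact (eq_of_absolutelyContinuous_ergodic hT hT' hid μ ρ hμ hρ.toMeasurePreserving hrac).symm
  · -- ρ A = 1 : mutually singular
    right
    have hρA : ρ Aᶜ = 0 := by
      have h1' : ρ A = 1 := by simpa using measure_congr h1
      exact (prob_compl_eq_zero_iff hAm).mpr h1'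
    exact ⟨A, hAm, hμA, hρA⟩

lemma ergodic_map_of_comm {P : α → α} (hP : Measurable P) (hT : Measurable T)
    (hcomm : T ∘ P = P ∘ T) (μ : Measure α) (hμ : Ergodic T μ) : Ergodic T (μ.map P) := by
  constructor
  · constructor
    · exact hT
    · rw [Measure.map_map hT hP, hcomm, ← Measure.map_map hP hT,
        hμ.toMeasurePreserving.map_eq]
  · constructor
    intro s hs hTs
    rw [eventuallyConst_set']
    have hP1 : T ⁻¹' (P ⁻¹' s) = P ⁻¹' s := by
      rw [← Set.preimage_comp, ← hcomm, Set.preimage_comp, hTs]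
    rcases hμ.toPreErgodic.ae_empty_or_univ (hP hs) hP1 with h0 | h1
    · left
      rw [ae_eq_empty] at h0 ⊢
      rw [Measure.map_apply hP hs]
      exact h0
    · right
      rw [ae_eq_univ] at h1 ⊢
      rw [Measure.map_apply hP hs.compl, Set.preimage_compl]
      exact h1

end ErgMeas

set_option maxHeartbeats 1000000 in
/-- Degree joinings over `ν` are unique up to a permutation of
the coordinates. -/
theorem degree_joining_unique
    (X : Set (ℤ → A)) (Y : Set (ℤ → B)) (π : (ℤ → A) → ℤ → B)
    (hXsofic : IsSofic X) (hXirr : IsIrreducibleShift X)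
    (hfc : IsFactorCodeOn π X Y)
    (hfto : ∀ y : ℤ → B, (X ∩ π ⁻¹' {y}).Finite)
    (d : ℕ) (hd : 0 < d)
    (hdeg : ∀ y, DoublyTransitiveIn Y y → (X ∩ π ⁻¹' {y}).ncard = d)
    (ν : Measure (ℤ → B)) [IsProbabilityMeasure ν]
    (hνerg : Ergodic shiftMap ν) (hνY : ν Y = 1) (hνfull : FullSupportOn ν Y)
    (lam lam' : Measure (Fin d → ℤ → A))
    (hlam : IsDegreeJoining X π ν d lam) (hlam' : IsDegreeJoining X π ν d lam') :
    ∃ f : Equiv.Perm (Fin d), lam' = lam.map (fun x i => x (f i)) := by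
  classical
  haveI : MeasurableSpace.CountablySeparated (ℤ → B) :=
    MeasurableSpace.countablySeparated_of_separatesPoints
  by_contra hcon
  push_neg at hcon
  obtain ⟨hlamErg, ⟨⟨hlamProb, hlamShift, hlamFib⟩, hlamMarg⟩, hlamSep⟩ := hlam
  obtain ⟨hlamErg', ⟨⟨hlamProb', hlamShift', hlamFib'⟩, hlamMarg'⟩, hlamSep'⟩ := hlam'
  haveI := hlamProb
  haveI := hlamProb'
  haveI : WellFoundedLT (Fin d) := Finite.to_wellFoundedLT
  have hπc : Continuous π := hfc.1.continuous
  have hπm : Measurable π := hπc.measurable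
  have hXcomp : IsCompact X := hXsofic.isCompact
  have hXm : MeasurableSet X := hXcomp.isClosed.measurableSet
  have hYm : MeasurableSet Y := by
    rw [← hfc.2]
    exact (hXcomp.image hπc).isClosed.measurableSet
  obtain ⟨D, hDm, hD1, hDdt⟩ := ae_doublyTransitive Y hYm ν hνerg hνY hνfull
  set i₀ : Fin d := ⟨0, hd⟩ with hi₀
  set q : (Fin d → ℤ → A) → (ℤ → B) := fun x => π (x i₀) with hq
  have hqm : Measurable q := hπm.comp (measurable_pi_apply i₀)
  obtain ⟨θ, hθ⟩ := exists_measurableEmbedding_real (ℤ → A)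
  set c := sortMap θ d with hc
  have hcm : Measurable c := measurable_sortMap hθ.measurable hθ.injective
  set P : Equiv.Perm (Fin d) → (Fin d → ℤ → A) → (Fin d → ℤ → A) :=
    fun f x i => x (f i) with hP
  have hPm : ∀ f, Measurable (P f) :=
    fun f => measurable_pi_lambda _ fun i => measurable_pi_apply _
  -- measurable building blocks
  have hXim : ∀ i : Fin d, MeasurableSet {x : Fin d → ℤ → A | x i ∈ X} :=
    fun i => (measurable_pi_apply i) hXm
  have hπeqm : ∀ i j : Fin d, MeasurableSet {x : Fin d → ℤ → A | π (x i) = π (x j)} := by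
    intro i j
    exact ((hπm.comp (measurable_pi_apply i)).stronglyMeasurable).measurableSet_eq_fun
      ((hπm.comp (measurable_pi_apply j)).stronglyMeasurable)
  have hneqm : ∀ i j : Fin d, MeasurableSet {x : Fin d → ℤ → A | i ≠ j → x i ≠ x j} := by
    intro i j
    by_cases hij : i = j
    · subst hij
      have : {x : Fin d → ℤ → A | i ≠ i → x i ≠ x i} = Set.univ := by
        ext x; simp
      rw [this]; exact MeasurableSet.univ
    · have : {x : Fin d → ℤ → A | i ≠ j → x i ≠ x j} = {x | x i = x j}ᶜ := by
        ext x; simp [hij]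
      rw [this]
      exact (((measurable_pi_apply i).stronglyMeasurable).measurableSet_eq_fun
        ((measurable_pi_apply j).stronglyMeasurable)).compl
  have hfibSm : MeasurableSet {x : Fin d → ℤ → A | (∀ i, x i ∈ X) ∧ ∀ i j, π (x i) = π (x j)} := by
    have : {x : Fin d → ℤ → A | (∀ i, x i ∈ X) ∧ ∀ i j, π (x i) = π (x j)}
        = (⋂ i, {x | x i ∈ X}) ∩ ⋂ i, ⋂ j, {x | π (x i) = π (x j)} := by
      ext x; simp [Set.mem_iInter, forall_and]
    rw [this]
    exact (MeasurableSet.iInter hXim).inter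
      (MeasurableSet.iInter fun i => MeasurableSet.iInter fun j => hπeqm i j)
  have hsepSm : MeasurableSet {x : Fin d → ℤ → A | ∀ i j : Fin d, i ≠ j → x i ≠ x j} := by
    have : {x : Fin d → ℤ → A | ∀ i j : Fin d, i ≠ j → x i ≠ x j}
        = ⋂ i, ⋂ j, {x | i ≠ j → x i ≠ x j} := by
      ext x; simp [Set.mem_iInter]
    rw [this]
    exact MeasurableSet.iInter fun i => MeasurableSet.iInter fun j => hneqm i j
  set G : Set (Fin d → ℤ → A) :=
    {x | ((∀ i, x i ∈ X) ∧ ∀ i j, π (x i) = π (x j)) ∧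
      (∀ i j : Fin d, i ≠ j → x i ≠ x j) ∧ q x ∈ D} with hG
  have hGm : MeasurableSet G := by
    have hGeq : G = {x : Fin d → ℤ → A | (∀ i, x i ∈ X) ∧ ∀ i j, π (x i) = π (x j)}
        ∩ ({x | ∀ i j : Fin d, i ≠ j → x i ≠ x j} ∩ q ⁻¹' D) :=
      Set.ext fun x => Iff.rfl
    rw [hGeq]
    exact hfibSm.inter (hsepSm.inter (hqm hDm))
  have hGinj : ∀ x ∈ G, Function.Injective x := by
    intro x hx i j hij
    by_contra hne
    exact hx.2.1 i j hne hij
  -- the sorted fiber set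
  set S₀ : Set (Fin d → ℤ → A) :=
    {x | (q x ∈ D ∧ (∀ i, x i ∈ X) ∧ ∀ i j, π (x i) = π (x j)) ∧
      StrictMono (fun i => θ (x i))} with hS₀
  have hmonom : MeasurableSet {x : Fin d → ℤ → A | StrictMono (fun i => θ (x i))} := by
    have heq : {x : Fin d → ℤ → A | StrictMono (fun i => θ (x i))}
        = ⋂ (i : Fin d), ⋂ (j : Fin d), ⋂ (_ : i < j), {x | θ (x i) < θ (x j)} := by
      ext x
      simp only [Set.mem_setOf_eq, Set.mem_iInter]
      exact ⟨fun h i j hij => h hij, fun h i j hij => h i j hij⟩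
    rw [heq]
    exact MeasurableSet.iInter fun i => MeasurableSet.iInter fun j =>
      MeasurableSet.iInter fun _ => measurableSet_lt
        (hθ.measurable.comp (measurable_pi_apply i)) (hθ.measurable.comp (measurable_pi_apply j))
  have hS₀m : MeasurableSet S₀ := by
    have heq : S₀ = (q ⁻¹' D ∩ {x : Fin d → ℤ → A | (∀ i, x i ∈ X) ∧ ∀ i j, π (x i) = π (x j)})
        ∩ {x | StrictMono (fun i => θ (x i))} :=
      Set.ext fun x => Iff.rfl
    rw [heq]
    exact ((hqm hDm).inter hfibSm).inter hmonom
  -- pointwise facts about c on G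
  have hsort : ∀ x ∈ G, ∃ g : Equiv.Perm (Fin d),
      c x = (fun i => x (g i)) ∧ StrictMono (fun i => θ (x (g i))) := by
    intro x hx
    exact sortMap_spec hθ.injective (hGinj x hx)
  have hcS₀ : ∀ x ∈ G, c x ∈ S₀ := by
    intro x hx
    obtain ⟨g, hgc, hgs⟩ := hsort x hx
    refine ⟨⟨?_, ?_, ?_⟩, ?_⟩
    · show q (c x) ∈ D
      have : q (c x) = π ((c x) i₀) := rfl
      rw [this, hgc]
      have := hx.1.2 (g i₀) i₀
      simp only at this ⊢
      rw [this]
      exact hx.2.2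
    · intro i; rw [hgc]; exact hx.1.1 (g i)
    · intro i j; rw [hgc]; exact hx.1.2 (g i) (g j)
    · have : (fun i => θ ((c x) i)) = fun i => θ (x (g i)) := by rw [hgc]
      show StrictMono fun i => θ ((c x) i)
      rw [this]; exact hgs
  have hqc : ∀ x ∈ G, q (c x) = q x := by
    intro x hx
    obtain ⟨g, hgc, -⟩ := hsort x hx
    show π ((c x) i₀) = π (x i₀)
    rw [hgc]
    exact hx.1.2 (g i₀) i₀
  -- injectivity of q on S₀
  have hInjq : Set.InjOn q S₀ := by
    intro x hx x' hx' hqq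
    set y := q x with hy
    have hyD : y ∈ D := hx.1.1
    have hxinj : Function.Injective x := by
      intro i j hij
      have : (fun i => θ (x i)) i = (fun i => θ (x i)) j := by simp [hij]
      exact hx.2.injective this
    have hx'inj : Function.Injective x' := by
      intro i j hij
      have : (fun i => θ (x' i)) i = (fun i => θ (x' i)) j := by simp [hij]
      exact hx'.2.injective this
    have hcard : (X ∩ π ⁻¹' {y}).ncard = d := hdeg y (hDdt y hyD)
    have hrange : ∀ z : Fin d → ℤ → A, z ∈ S₀ → q z = y →
        Function.Injective z → Set.range z = X ∩ π ⁻¹' {y} := by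
      intro z hz hzy hzinj
      have hsub : Set.range z ⊆ X ∩ π ⁻¹' {y} := by
        rintro - ⟨i, rfl⟩
        refine ⟨hz.1.2.1 i, ?_⟩
        have := hz.1.2.2 i i₀
        simp only [Set.mem_preimage, Set.mem_singleton_iff]
        rw [this]
        exact hzy
      have hncard : (Set.range z).ncard = d := by
        rw [← Set.image_univ, Set.ncard_image_of_injective _ hzinj, Set.ncard_univ,
          Nat.card_eq_fintype_card, Fintype.card_fin]
      exact Set.eq_of_subset_of_ncard_le hsub (by rw [hcard, hncard]) (hfto y)
    have hr1 : Set.range x = X ∩ π ⁻¹' {y} := hrange x hx rfl hxinj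
    have hr2 : Set.range x' = X ∩ π ⁻¹' {y} := hrange x' hx' hqq.symm hx'inj
    have hrθ : Set.range (fun i => θ (x i)) = Set.range (fun i => θ (x' i)) := by
      have e1 : (fun i => θ (x i)) = θ ∘ x := rfl
      have e2 : (fun i => θ (x' i)) = θ ∘ x' := rfl
      rw [e1, e2, Set.range_comp, Set.range_comp, hr1, hr2]
    have heq := (hx.2.range_inj hx'.2).mp hrθ
    funext i
    exact hθ.injective (congrFun heq i)
  -- the key identity for both measures
  have key : ∀ κ : Measure (Fin d → ℤ → A), IsProbabilityMeasure κ →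
      κ {x | (∀ i, x i ∈ X) ∧ ∀ i j, π (x i) = π (x j)} = 1 →
      κ {x | ∀ i j : Fin d, i ≠ j → x i ≠ x j} = 1 →
      κ.map (fun x => π (x i₀)) = ν →
      κ G = 1 ∧ ∀ E : Set (Fin d → ℤ → A), MeasurableSet E →
        κ.map c E = ν (q '' (E ∩ S₀)) := by
    intro κ hκp hκfib hκsep hκmarg
    haveI := hκp
    have hκq : κ.map q = ν := by rw [hq]; exact hκmarg
    have hκD : κ (q ⁻¹' D) = 1 := by
      rw [← Measure.map_apply hqm hDm, hκq]
      exact hD1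
    have hκG : κ G = 1 := by
      have hGeq : G = {x : Fin d → ℤ → A | (∀ i, x i ∈ X) ∧ ∀ i j, π (x i) = π (x j)}
          ∩ ({x | ∀ i j : Fin d, i ≠ j → x i ≠ x j} ∩ q ⁻¹' D) :=
        Set.ext fun x => Iff.rfl
      rw [← prob_compl_eq_zero_iff (hGeq ▸ (hfibSm.inter (hsepSm.inter (hqm hDm))))]
      rw [hGeq, Set.compl_inter, Set.compl_inter]
      refine measure_union_null ((prob_compl_eq_zero_iff hfibSm).mpr hκfib)
        (measure_union_null ((prob_compl_eq_zero_iff hsepSm).mpr hκsep)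
          ((prob_compl_eq_zero_iff (hqm hDm)).mpr hκD))
    refine ⟨hκG, fun E hE => ?_⟩
    set μc := κ.map c with hμc
    haveI : IsProbabilityMeasure μc := Measure.isProbabilityMeasure_map hcm.aemeasurable
    have hμcS₀ : μc S₀ = 1 := by
      rw [hμc, Measure.map_apply hcm hS₀m]
      refine le_antisymm prob_le_one ?_
      rw [← hκG]
      exact measure_mono fun x hx => hcS₀ x hx
    have hμcS₀c : μc S₀ᶜ = 0 := (prob_compl_eq_zero_iff hS₀m).mpr hμcS₀
    set F := q '' (E ∩ S₀) with hF
    have hFm : MeasurableSet F :=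
      (hE.inter hS₀m).image_of_measurable_injOn hqm (hInjq.mono Set.inter_subset_right)
    have hES₀ : E ∩ S₀ = q ⁻¹' F ∩ S₀ := by
      ext x
      constructor
      · intro hx
        exact ⟨Set.mem_image_of_mem q hx, hx.2⟩
      · rintro ⟨hxF, hxS₀⟩
        obtain ⟨x', hx', hqx'⟩ := hxF
        have : x' = x := hInjq hx'.2 hxS₀ hqx'
        rw [← this]
        exact hx'
    have full_inter : ∀ W : Set (Fin d → ℤ → A), MeasurableSet W → μc W = μc (W ∩ S₀) := by
      intro W hW
      rw [← measure_inter_add_diff W hS₀m]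
      have : μc (W \ S₀) = 0 := measure_mono_null (Set.diff_subset_compl _ _) hμcS₀c
      rw [this, add_zero]
    calc μc E = μc (E ∩ S₀) := full_inter E hE
      _ = μc (q ⁻¹' F ∩ S₀) := by rw [hES₀]
      _ = μc (q ⁻¹' F) := (full_inter _ (hqm hFm)).symm
      _ = κ (c ⁻¹' (q ⁻¹' F)) := Measure.map_apply hcm (hqm hFm)
      _ = κ (c ⁻¹' (q ⁻¹' F) ∩ G) := by
          rw [← measure_inter_add_diff _ hGm]
          have : κ (c ⁻¹' (q ⁻¹' F) \ G) = 0 :=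
            measure_mono_null (Set.diff_subset_compl _ _) ((prob_compl_eq_zero_iff hGm).mpr hκG)
          rw [this, add_zero]
      _ = κ (q ⁻¹' F ∩ G) := by
          congr 1
          ext x
          simp only [Set.mem_inter_iff, Set.mem_preimage]
          constructor
          · rintro ⟨hxF, hxG⟩
            rw [hqc x hxG] at hxF
            exact ⟨hxF, hxG⟩
          · rintro ⟨hxF, hxG⟩
            rw [← hqc x hxG] at hxF
            exact ⟨hxF, hxG⟩
      _ = κ (q ⁻¹' F) := by
          have hd0 : κ (q ⁻¹' F \ G) = 0 :=
            measure_mono_null (Set.diff_subset_compl _ _) ((prob_compl_eq_zero_iff hGm).mpr hκG)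
          rw [← measure_inter_add_diff (q ⁻¹' F) hGm, hd0, add_zero]
      _ = ν F := by rw [← hκq, Measure.map_apply hqm hFm]
  obtain ⟨hlamG, hlamKey⟩ := key lam hlamProb hlamFib hlamSep (hlamMarg i₀)
  obtain ⟨hlamG', hlamKey'⟩ := key lam' hlamProb' hlamFib' hlamSep' (hlamMarg' i₀)
  -- ergodic image measures
  set T' : (Fin d → ℤ → A) → (Fin d → ℤ → A) := fun x i => shiftInvMap (x i) with hT'
  have hT'm : Measurable T' :=
    measurable_pi_lambda _ fun i => measurable_shiftInvMap.comp (measurable_pi_apply i)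
  have hid : T' ∘ prodShift = id := by
    funext x
    show (fun i => shiftInvMap (prodShift x i)) = x
    funext i
    exact shiftInv_shift (x i)
  have hcomm : ∀ f : Equiv.Perm (Fin d), prodShift ∘ (P f) = (P f) ∘ prodShift := by
    intro f
    funext x
    rfl
  set ρ : Equiv.Perm (Fin d) → Measure (Fin d → ℤ → A) := fun f => lam.map (P f) with hρ
  haveI : ∀ f, IsProbabilityMeasure (ρ f) :=
    fun f => Measure.isProbabilityMeasure_map (hPm f).aemeasurable
  have hρerg : ∀ f, Ergodic prodShift (ρ f) :=
    fun f => ergodic_map_of_comm (hPm f) measurable_prodShift (hcomm f) lam hlamErg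
  -- mutual singularity
  have hsing : ∀ f : Equiv.Perm (Fin d), Measure.MutuallySingular lam' (ρ f) := by
    intro f
    rcases ergodic_eq_or_mutuallySingular measurable_prodShift hT'm hid lam' (ρ f)
        hlamErg' (hρerg f) with heq | hsg
    · exfalso
      exact hcon f (by rw [heq, hρ, hP])
    · exact hsg
  choose sf hsfm hsf1 hsf2 using hsing
  set s : Set (Fin d → ℤ → A) := ⋃ f, sf f with hs
  have hsm : MeasurableSet s := MeasurableSet.iUnion hsfm
  have hs0 : lam' s = 0 := measure_iUnion_null hsf1
  have hρs : ∀ f, ρ f sᶜ = 0 := by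
    intro f
    exact measure_mono_null (Set.compl_subset_compl.mpr (Set.subset_iUnion sf f)) (hsf2 f)
  have hlamPs : ∀ f, lam ((P f) ⁻¹' sᶜ) = 0 := by
    intro f
    rw [← Measure.map_apply (hPm f) hsm.compl]
    exact hρs f
  -- each lam' (c⁻¹ (P f⁻¹ sᶜ)) = 0
  have hterm : ∀ f : Equiv.Perm (Fin d), lam' (c ⁻¹' ((P f) ⁻¹' sᶜ)) = 0 := by
    intro f
    have hB : MeasurableSet ((P f) ⁻¹' sᶜ) := (hPm f) hsm.compl
    have h1 : lam' (c ⁻¹' ((P f) ⁻¹' sᶜ)) = lam'.map c ((P f) ⁻¹' sᶜ) :=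
      (Measure.map_apply hcm hB).symm
    rw [h1, hlamKey' _ hB, ← hlamKey _ hB, Measure.map_apply hcm hB]
    -- now show lam (c⁻¹ B) = 0
    rw [← measure_inter_add_diff _ hGm]
    have hdiff : lam (c ⁻¹' ((P f) ⁻¹' sᶜ) \ G) = 0 :=
      measure_mono_null (Set.diff_subset_compl _ _) ((prob_compl_eq_zero_iff hGm).mpr hlamG)
    rw [hdiff, add_zero]
    refine measure_mono_null ?_ (measure_iUnion_null hlamPs)
    rintro x ⟨hxB, hxG⟩
    obtain ⟨g, hgc, -⟩ := hsort x hxG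
    refine Set.mem_iUnion.mpr ⟨f.trans g, ?_⟩
    have : P f (c x) = P (f.trans g) x := by
      funext i
      show (c x) (f i) = x ((f.trans g) i)
      rw [hgc]
      rfl
    have hxB' : P f (c x) ∈ sᶜ := hxB
    rw [this] at hxB'
    exact hxB'
  have hsc0 : lam' sᶜ = 0 := by
    rw [← measure_inter_add_diff _ hGm]
    have hdiff : lam' (sᶜ \ G) = 0 :=
      measure_mono_null (Set.diff_subset_compl _ _) ((prob_compl_eq_zero_iff hGm).mpr hlamG')
    rw [hdiff, add_zero]
    refine measure_mono_null ?_ (measure_iUnion_null hterm)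
    rintro x ⟨hxs, hxG⟩
    obtain ⟨g, hgc, -⟩ := hsort x hxG
    refine Set.mem_iUnion.mpr ⟨g.symm, ?_⟩
    show c x ∈ (P g.symm) ⁻¹' sᶜ
    have : P g.symm (c x) = x := by
      funext i
      show (c x) (g.symm i) = x i
      rw [hgc]
      show x (g (g.symm i)) = x i
      rw [Equiv.apply_symm_apply]
    rw [Set.mem_preimage, this]
    exact hxs
  have : (1 : ℝ≥0∞) = 0 := by
    have huniv : lam' Set.univ = 1 := measure_univ
    have : lam' Set.univ ≤ lam' s + lam' sᶜ := by
      rw [← Set.union_compl_self s]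
      exact measure_union_le _ _
    rw [huniv, hs0, hsc0, add_zero] at this
    exact le_antisymm this (zero_le)
  exact one_ne_zero this
end

section
/- Let T: X → X and S: Y → Y be homeomorphisms of compact metric spaces and π: X → Y a continuous surjection with π∘T = S∘π. Then the map F: Y → {1, 2, …} ∪ {∞} defined by F(y) = |π⁻¹(y)| is universally measurable, and for every ergodic S-invariant Borel probability measure ν on Y, F is constant ν-almost everywhere. -/
open MeasureTheory Set Filter
open scoped ENNReal

/-- From `m ≤ s.encard` we can extract an injective `m`-tuple in `s`. -/
lemma exists_injective_tuple {X : Type*} :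
    ∀ (m : ℕ) (s : Set X), (m : ℕ∞) ≤ s.encard →
      ∃ f : Fin m → X, Function.Injective f ∧ ∀ i, f i ∈ s := by
  intro m
  induction m with
  | zero =>
    intro s _
    exact ⟨fun i => i.elim0, fun i => i.elim0, fun i => i.elim0⟩
  | succ n ih =>
    intro s hs
    have hne : s.Nonempty := by
      rw [← Set.one_le_encard_iff_nonempty]
      exact le_trans (by exact_mod_cast Nat.one_le_iff_ne_zero.2 (Nat.succ_ne_zero n)) hs
    obtain ⟨x, hx⟩ := hne
    have hdiff : (n : ℕ∞) ≤ (s \ {x}).encard := by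
      rw [Set.encard_diff_singleton_of_mem hx]
      have h1 : (1 : ℕ∞) + (n : ℕ∞) ≤ s.encard := by
        rw [add_comm]
        rw [show (n : ℕ∞) + 1 = ((n + 1 : ℕ) : ℕ∞) by push_cast; ring]
        exact hs
      exact ENat.le_sub_of_add_le_left (by simp) h1
    obtain ⟨f, hfinj, hfs⟩ := ih (s \ {x}) hdiff
    refine ⟨Fin.cons x f, ?_, ?_⟩
    · rw [Fin.cons_injective_iff]
      refine ⟨?_, hfinj⟩
      rintro ⟨i, rfl⟩
      exact (hfs i).2 rfl
    · intro i
      refine Fin.cases ?_ ?_ i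
      · simpa using hx
      · intro j; simpa using (hfs j).1

/-- A finite injective tuple in a metric space is uniformly separated. -/
lemma exists_pos_sep {X : Type*} [MetricSpace X] {m : ℕ} (f : Fin m → X)
    (hf : Function.Injective f) :
    ∃ ε : ℝ, 0 < ε ∧ ∀ i j, i ≠ j → ε ≤ dist (f i) (f j) := by
  classical
  set P : Finset (Fin m × Fin m) := Finset.univ.filter (fun p => p.1 ≠ p.2) with hP
  by_cases hPne : P.Nonempty
  · obtain ⟨p₀, hmem, hmin⟩ := P.exists_min_image (fun p => dist (f p.1) (f p.2)) hPne
    have hne : p₀.1 ≠ p₀.2 := by simpa [hP] using hmem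
    refine ⟨dist (f p₀.1) (f p₀.2), ?_, ?_⟩
    · exact dist_pos.2 fun h => hne (hf h)
    · intro i j hij
      exact hmin (i, j) (by simp [hP, hij])
  · exact ⟨1, one_pos, fun i j hij => absurd ⟨(i, j), by simp [hP, hij]⟩ hPne⟩

/-- The fiber-cardinality map of a continuous map from a compact metric space is Borel
measurable. -/
lemma fiber_card_measurable {X Y : Type*} [MetricSpace X] [CompactSpace X]
    [MetricSpace Y] [MeasurableSpace Y] [BorelSpace Y]
    (π : X → Y) (hπc : Continuous π) :
    Measurable (fun y => (π ⁻¹' {y}).encard) := by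
  classical
  set F : Y → ℕ∞ := fun y => (π ⁻¹' {y}).encard with hF
  -- the sets `A n = {y | n ≤ F y}`
  set A : ℕ → Set Y := fun n => {y | (n : ℕ∞) ≤ F y} with hA
  have hAmeas : ∀ n, MeasurableSet (A n) := by
    intro n
    cases n with
    | zero =>
      have : A 0 = Set.univ := by
        ext y; simp [hA]
      rw [this]; exact MeasurableSet.univ
    | succ n =>
      -- `A (n+1)` is a countable union of images of compact sets
      have key : A (n + 1) =
          ⋃ k : ℕ, (fun f : Fin (n + 1) → X => π (f 0)) ''
            ((⋂ (i) (j) (_ : i ≠ j),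
                {f : Fin (n + 1) → X | 1 / (k + 1 : ℝ) ≤ dist (f i) (f j)}) ∩
              ⋂ i, {f : Fin (n + 1) → X | π (f i) = π (f 0)}) := by
        ext y
        simp only [Set.mem_iUnion, Set.mem_image, Set.mem_inter_iff, Set.mem_iInter,
          Set.mem_setOf_eq, hA]
        constructor
        · intro hy
          obtain ⟨f, hfinj, hfs⟩ := exists_injective_tuple (n + 1) (π ⁻¹' {y}) (by
            exact_mod_cast hy)
          obtain ⟨ε, hε, hsep⟩ := exists_pos_sep f hfinj
          obtain ⟨k, hk⟩ := exists_nat_one_div_lt hε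
          refine ⟨k, f, ⟨fun i j hij => le_trans (le_of_lt (by exact_mod_cast hk))
            (hsep i j hij), fun i => ?_⟩, ?_⟩
          · have h0 := hfs 0
            have hi := hfs i
            simp only [Set.mem_preimage, Set.mem_singleton_iff] at h0 hi
            rw [h0, hi]
          · have h0 := hfs 0
            simpa using h0
        · rintro ⟨k, f, ⟨hsep, hfib⟩, rfl⟩
          have hfinj : Function.Injective f := by
            intro i j hij
            by_contra hne
            have := hsep i j hne
            rw [hij, dist_self] at this
            have hpos : (0 : ℝ) < 1 / (k + 1 : ℝ) := by positivity
            linarith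
          have hsub : Set.range f ⊆ π ⁻¹' {π (f 0)} := by
            rintro _ ⟨i, rfl⟩
            simp [hfib i]
          calc ((n + 1 : ℕ) : ℕ∞) = (Set.range f).encard := by
                rw [← Set.image_univ, hfinj.encard_image, Set.encard_univ]
                simp
            _ ≤ (π ⁻¹' {π (f 0)}).encard := Set.encard_mono hsub
      rw [key]
      refine MeasurableSet.iUnion fun k => ?_
      -- the set of tuples is closed, hence compact; its image is compact, hence measurable
      have hclosed : IsClosed ((⋂ (i) (j) (_ : i ≠ j),
          {f : Fin (n + 1) → X | 1 / (k + 1 : ℝ) ≤ dist (f i) (f j)}) ∩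
          ⋂ i, {f : Fin (n + 1) → X | π (f i) = π (f 0)}) := by
        refine IsClosed.inter ?_ ?_
        · refine isClosed_iInter fun i => isClosed_iInter fun j =>
            isClosed_iInter fun _ => ?_
          exact isClosed_le continuous_const ((continuous_apply i).dist (continuous_apply j))
        · exact isClosed_iInter fun i =>
            isClosed_eq (hπc.comp (continuous_apply i)) (hπc.comp (continuous_apply 0))
      have hcomp : IsCompact ((⋂ (i) (j) (_ : i ≠ j),
          {f : Fin (n + 1) → X | 1 / (k + 1 : ℝ) ≤ dist (f i) (f j)}) ∩
          ⋂ i, {f : Fin (n + 1) → X | π (f i) = π (f 0)}) := hclosed.isCompact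
      exact (hcomp.image (hπc.comp (continuous_apply 0))).isClosed.measurableSet
  -- conclude measurability via `ENat.measurable_iff`
  rw [ENat.measurable_iff]
  intro n
  have : F ⁻¹' {(n : ℕ∞)} = A n \ A (n + 1) := by
    ext y
    simp only [Set.mem_preimage, Set.mem_singleton_iff, Set.mem_diff, hA, Set.mem_setOf_eq]
    constructor
    · intro h
      refine ⟨le_of_eq h.symm, ?_⟩
      rw [h]
      intro hle
      exact absurd (by exact_mod_cast hle) (Nat.not_succ_le_self n)
    · rintro ⟨h₁, h₂⟩
      have hlt : F y < ((n + 1 : ℕ) : ℕ∞) := lt_of_not_ge h₂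
      have hne : F y ≠ ⊤ := ne_top_of_lt hlt
      obtain ⟨m, hm⟩ := WithTop.ne_top_iff_exists.1 hne
      rw [← hm] at hlt h₁ ⊢
      have hmn : m < n + 1 := by exact Nat.cast_lt.mp hlt
      have hnm : n ≤ m := by exact Nat.cast_le.mp h₁
      have hmn' : m = n := le_antisymm (Nat.lt_succ_iff.1 hmn) hnm
      exact hmn' ▸ rfl
  rw [this]
  exact (hAmeas n).diff (hAmeas (n + 1))

/-- For a factor map `π : (X,T) → (Y,S)` between topological dynamical
systems on compact metric spaces, the fiber-cardinality map `y ↦ |π⁻¹(y)|` is universally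
measurable (null-measurable for every Borel probability measure on `Y`), and it is
almost-everywhere constant with respect to every ergodic `S`-invariant Borel probability
measure on `Y`. -/
theorem fiber_card_universally_measurable_and_ae_const
    {X Y : Type*} [MetricSpace X] [CompactSpace X] [MetricSpace Y] [CompactSpace Y]
    [MeasurableSpace X] [BorelSpace X] [MeasurableSpace Y] [BorelSpace Y]
    (T : X ≃ₜ X) (S : Y ≃ₜ Y) (π : X → Y)
    (hπc : Continuous π) (hπs : Function.Surjective π)
    (hcomm : π ∘ T = S ∘ π) :
    (∀ μ : Measure Y, IsProbabilityMeasure μ →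
      NullMeasurable (fun y => (π ⁻¹' {y}).encard) μ) ∧
    ∀ ν : Measure Y, IsProbabilityMeasure ν → Ergodic S ν →
      ∃ c : ℕ∞, ∀ᵐ y ∂ν, (π ⁻¹' {y}).encard = c := by
  have hmeas : Measurable (fun y => (π ⁻¹' {y}).encard) := fiber_card_measurable π hπc
  refine ⟨fun μ _ => hmeas.nullMeasurable, fun ν _ hErg => ?_⟩
  -- invariance of the fiber cardinality
  have hfiber : ∀ y : Y, π ⁻¹' {S y} = T '' (π ⁻¹' {y}) := by
    intro y
    ext x
    have hx : π (T (T.symm x)) = S (π (T.symm x)) := congrFun hcomm (T.symm x)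
    rw [T.apply_symm_apply] at hx
    simp only [Set.mem_preimage, Set.mem_singleton_iff]
    constructor
    · intro h
      refine ⟨T.symm x, ?_, T.apply_symm_apply x⟩
      have : S (π (T.symm x)) = S y := by rw [← hx, h]
      simpa using S.injective this
    · rintro ⟨z, hz, rfl⟩
      have : π (T z) = S (π z) := congrFun hcomm z
      simp only [Set.mem_preimage, Set.mem_singleton_iff] at hz
      rw [this, hz]
  have hinv : (fun y => (π ⁻¹' {y}).encard) ∘ S = fun y => (π ⁻¹' {y}).encard := by
    funext y
    simp only [Function.comp_apply]
    rw [hfiber y, T.injective.encard_image]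
  obtain ⟨c, hc⟩ := hErg.ae_eq_const_of_ae_eq_comp₀ hmeas.nullMeasurable
    (Filter.EventuallyEq.of_eq hinv)
  exact ⟨c, hc⟩
end

section
/- Let π: X → Y be a Borel-measurable map between Polish spaces and let A ⊆ X be a Borel subset. Then the map F_A: Y → {0, 1, 2, …} ∪ {∞} defined by F_A(y) = |π⁻¹(y) ∩ A| is universally measurable. -/
open MeasureTheory Set Filter
open scoped ENNReal

/-- `n ≤ s.encard` iff there is an injection `Fin n ↪ s`. -/
lemma le_encard_iff_exists_inj {α : Type*} {s : Set α} {n : ℕ} :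
    (n : ℕ∞) ≤ s.encard ↔ ∃ v : Fin n → α, Function.Injective v ∧ ∀ i, v i ∈ s := by
  constructor
  · intro h
    obtain ⟨t, hts, ht⟩ := Set.exists_subset_encard_eq h
    have htfin : t.Finite := Set.finite_of_encard_eq_coe ht
    have hcard : htfin.toFinset.card = n := by
      have h2 := htfin.encard_eq_coe_toFinset_card
      rw [h2] at ht
      exact_mod_cast ht
    refine ⟨fun i => ((htfin.toFinset.equivFin.symm (Fin.cast hcard.symm i) : α)), ?_, ?_⟩
    · exact Subtype.val_injective.comp
        (htfin.toFinset.equivFin.symm.injective.comp (Fin.cast_injective _))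
    · intro i
      have hmem := (htfin.toFinset.equivFin.symm (Fin.cast hcard.symm i)).2
      rw [Set.Finite.mem_toFinset] at hmem
      exact hts hmem
  · rintro ⟨v, hvinj, hvmem⟩
    have hr : (Set.range v).encard = n := by
      rw [← Set.image_univ, Set.InjOn.encard_image hvinj.injOn, Set.encard_univ]
      simp
    calc (n : ℕ∞) = (Set.range v).encard := hr.symm
      _ ≤ s.encard := Set.encard_mono (Set.range_subset_iff.2 hvmem)

/-- **Capacitability / universal measurability of analytic sets**: any analytic set in a
Polish space is null-measurable with respect to every finite Borel measure. -/
theorem AnalyticSet.nullMeasurableSet_of_isFiniteMeasure {Y : Type*} [TopologicalSpace Y]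
    [PolishSpace Y] [MeasurableSpace Y] [BorelSpace Y] {s : Set Y}
    (hs : MeasureTheory.AnalyticSet s) (μ : Measure Y) [IsFiniteMeasure μ] :
    NullMeasurableSet s μ := by
  rw [MeasureTheory.AnalyticSet_def] at hs
  rcases hs with rfl | ⟨f, hfc, rfl⟩
  · exact MeasurableSet.empty.nullMeasurableSet
  -- Key inner-approximation claim
  have key : ∀ ε : ℝ≥0∞, ε ≠ 0 →
      ∃ M : Set Y, MeasurableSet M ∧ M ⊆ Set.range f ∧ μ (Set.range f) ≤ μ M + ε := by
    intro ε hε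
    obtain ⟨δ, hδpos, hδsum⟩ := ENNReal.exists_pos_sum_of_countable hε ℕ
    set D : (ℕ → ℕ) → ℕ → Set (ℕ → ℕ) := fun N k => {x | ∀ i < k, x i ≤ N i} with hD
    have hstep : ∀ (k : ℕ) (N : ℕ → ℕ), ∃ m : ℕ,
        μ (f '' D N k) ≤ μ (f '' D (Function.update N k m) (k + 1)) + δ k := by
      intro k N
      have hDm : ∀ m : ℕ, D (Function.update N k m) (k + 1) = D N k ∩ {x | x k ≤ m} := by
        intro m
        ext x
        simp only [hD, Set.mem_setOf_eq, Set.mem_inter_iff, Nat.lt_succ_iff_lt_or_eq]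
        constructor
        · intro h
          exact ⟨fun i hi => by simpa [Function.update_of_ne hi.ne] using h i (Or.inl hi),
                 by simpa using h k (Or.inr rfl)⟩
        · rintro ⟨h1, h2⟩ i hi
          rcases hi with hi | rfl
          · simpa [Function.update_of_ne hi.ne] using h1 i hi
          · simpa using h2
      have hmono : Monotone fun m : ℕ => D (Function.update N k m) (k + 1) := by
        intro a b hab x hx
        have hx' : x ∈ D N k ∩ {x | x k ≤ a} := (hDm a) ▸ hx
        show x ∈ D (Function.update N k b) (k + 1)
        rw [hDm b]
        exact ⟨hx'.1, hx'.2.trans hab⟩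
      have hunion : D N k = ⋃ m : ℕ, D (Function.update N k m) (k + 1) := by
        ext x
        simp only [Set.mem_iUnion, hDm, Set.mem_inter_iff, Set.mem_setOf_eq]
        exact ⟨fun h => ⟨x k, h, le_refl _⟩, fun ⟨m, h, _⟩ => h⟩
      have hsup : μ (f '' D N k) = ⨆ m : ℕ, μ (f '' D (Function.update N k m) (k + 1)) := by
        rw [hunion, Set.image_iUnion]
        refine Directed.measure_iUnion fun a b => ⟨max a b,
          Set.image_mono (hmono (le_max_left a b)),
          Set.image_mono (hmono (le_max_right a b))⟩
      by_cases hle : μ (f '' D N k) ≤ δ k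
      · exact ⟨0, hle.trans (le_add_left le_rfl)⟩
      · have hafin : μ (f '' D N k) ≠ ⊤ := (measure_lt_top μ _).ne
        have hane : μ (f '' D N k) ≠ 0 := fun h => hle (by simp [h])
        have hlt : μ (f '' D N k) - δ k < μ (f '' D N k) :=
          ENNReal.sub_lt_self hafin hane (by exact_mod_cast (hδpos k).ne')
        rw [hsup] at hlt
        obtain ⟨m, hm⟩ := lt_iSup_iff.mp hlt
        rw [← hsup] at hm
        refine ⟨m, ?_⟩
        exact ((ENNReal.sub_lt_iff_lt_right ENNReal.coe_ne_top (not_le.mp hle).le).mp hm).le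
    choose g hg using hstep
    let T : ℕ → ℕ → ℕ := fun k =>
      Nat.rec (fun _ => 0) (fun k Nk => Function.update Nk k (g k Nk)) k
    have hTsucc : ∀ k, T (k + 1) = Function.update (T k) k (g k (T k)) := fun _ => rfl
    set N : ℕ → ℕ := fun i => T (i + 1) i with hN
    have hagree : ∀ k i, i < k → T k i = N i := by
      intro k
      induction k with
      | zero => intro i hi; omega
      | succ k ih =>
        intro i hi
        rcases Nat.lt_succ_iff_lt_or_eq.mp hi with hi | rfl
        · rw [hTsucc, Function.update_of_ne hi.ne, ih i hi]
        · rfl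
    have hDN : ∀ k, D N k = D (T k) k := by
      intro k; ext x
      simp only [hD, Set.mem_setOf_eq]
      exact ⟨fun h i hi => by rw [hagree k i hi]; exact h i hi,
             fun h i hi => by rw [← hagree k i hi]; exact h i hi⟩
    have key2 : ∀ k, μ (Set.range f) ≤ μ (f '' D N k) + ε := by
      have main : ∀ k, μ (Set.range f) ≤ μ (f '' D N k) + ∑ i ∈ Finset.range k, (δ i : ℝ≥0∞) := by
        intro k
        induction k with
        | zero =>
          have h0 : D N 0 = Set.univ := by ext x; simp [hD]
          simp [h0, Set.image_univ]
        | succ k ih =>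
          calc μ (Set.range f) ≤ μ (f '' D N k) + ∑ i ∈ Finset.range k, (δ i : ℝ≥0∞) := ih
            _ = μ (f '' D (T k) k) + ∑ i ∈ Finset.range k, (δ i : ℝ≥0∞) := by rw [hDN]
            _ ≤ (μ (f '' D (Function.update (T k) k (g k (T k))) (k + 1)) + δ k)
                + ∑ i ∈ Finset.range k, (δ i : ℝ≥0∞) := add_le_add_left (hg k (T k)) _
            _ = μ (f '' D (T (k + 1)) (k + 1)) + ∑ i ∈ Finset.range (k + 1), (δ i : ℝ≥0∞) := by
                rw [← hTsucc, Finset.sum_range_succ]; ring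
            _ = μ (f '' D N (k + 1)) + ∑ i ∈ Finset.range (k + 1), (δ i : ℝ≥0∞) := by rw [hDN]
      intro k
      refine (main k).trans (add_le_add_right ?_ _)
      exact (ENNReal.sum_le_tsum _).trans hδsum.le
    set F : ℕ → Set Y := fun k => closure (f '' D N k) with hF
    have hFanti : Antitone F := by
      intro a b hab
      apply closure_mono
      apply Set.image_mono
      intro x hx i hi
      exact hx i (hi.trans_le hab)
    refine ⟨⋂ k, F k, MeasurableSet.iInter fun k => isClosed_closure.measurableSet, ?_, ?_⟩
    · -- ⋂ k, F k ⊆ range f  (compactness argument)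
      intro y hy
      letI := TopologicalSpace.upgradeIsCompletelyMetrizable Y
      have hsel : ∀ k : ℕ, ∃ x, x ∈ D N k ∧ dist y (f x) < 1 / (k + 1) := by
        intro k
        have hyk : y ∈ closure (f '' D N k) := Set.mem_iInter.mp hy k
        obtain ⟨z, hz, hdz⟩ := Metric.mem_closure_iff.mp hyk (1 / (k + 1)) (by positivity)
        obtain ⟨x, hx, rfl⟩ := hz
        exact ⟨x, hx, hdz⟩
      choose u hu hud using hsel
      set v : ℕ → ℕ → ℕ := fun k i => min (u k i) (N i) with hv
      have hC : IsCompact (Set.univ.pi fun i : ℕ => Set.Iic (N i)) :=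
        isCompact_univ_pi fun i => (Set.finite_Iic (N i)).isCompact
      have hvC : ∀ k, v k ∈ Set.univ.pi fun i : ℕ => Set.Iic (N i) :=
        fun k => Set.mem_univ_pi.mpr fun i => Set.mem_Iic.mpr (min_le_right _ _)
      obtain ⟨x, hxC, φ, hφ, hconv⟩ := hC.tendsto_subseq hvC
      have huconv : Filter.Tendsto (fun k => u (φ k)) Filter.atTop (nhds x) := by
        rw [tendsto_pi_nhds]
        intro i
        have h1 : Filter.Tendsto (fun k => v (φ k) i) Filter.atTop (nhds (x i)) :=
          (tendsto_pi_nhds.mp hconv) i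
        apply h1.congr'
        filter_upwards [Filter.eventually_ge_atTop (i + 1)] with k hk
        have hik : i < φ k := lt_of_lt_of_le (Nat.lt_of_lt_of_le (Nat.lt_succ_self i) hk) hφ.le_apply
        have hle : u (φ k) i ≤ N i := hu (φ k) i hik
        simp [hv, min_eq_left hle]
      have hfy : Filter.Tendsto (fun k : ℕ => f (u k)) Filter.atTop (nhds y) := by
        rw [tendsto_iff_dist_tendsto_zero]
        refine squeeze_zero (fun _ => dist_nonneg) (fun k => ?_)
          tendsto_one_div_add_atTop_nhds_zero_nat
        rw [dist_comm]
        exact (hud k).le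
      have hfy2 : Filter.Tendsto (fun k => f (u (φ k))) Filter.atTop (nhds y) :=
        hfy.comp hφ.tendsto_atTop
      have hfx : Filter.Tendsto (fun k => f (u (φ k))) Filter.atTop (nhds (f x)) :=
        (hfc.tendsto x).comp huconv
      exact ⟨x, (tendsto_nhds_unique hfy2 hfx).symm⟩
    · -- measure estimate
      have hiInf : μ (⋂ k, F k) = ⨅ k, μ (F k) :=
        Directed.measure_iInter (fun k => isClosed_closure.measurableSet.nullMeasurableSet)
          hFanti.directed_ge ⟨0, (measure_lt_top μ _).ne⟩
      rw [hiInf]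
      calc μ (Set.range f) ≤ ⨅ k, (μ (F k) + ε) :=
            le_iInf fun k => (key2 k).trans (add_le_add_left (measure_mono subset_closure) _)
        _ = (⨅ k, μ (F k)) + ε := by rw [ENNReal.iInf_add]
  -- From the key claim, build a measurable subset of full outer measure
  have hM : ∀ n : ℕ, ∃ M : Set Y, MeasurableSet M ∧ M ⊆ Set.range f ∧
      μ (Set.range f) ≤ μ M + (n : ℝ≥0∞)⁻¹ :=
    fun n => key _ (ENNReal.inv_ne_zero.mpr (ENNReal.natCast_ne_top n))
  choose M hMmeas hMsub hMle using hM
  have hEmeas : MeasurableSet (⋃ n, M n) := MeasurableSet.iUnion hMmeas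
  have hEsub : (⋃ n, M n) ⊆ Set.range f := Set.iUnion_subset hMsub
  have hmuE : μ (⋃ n, M n) = μ (Set.range f) := by
    refine le_antisymm (measure_mono hEsub) ?_
    refine ENNReal.le_of_forall_pos_le_add fun ε hε _ => ?_
    obtain ⟨n, hn⟩ := ENNReal.exists_inv_nat_lt (show (ε : ℝ≥0∞) ≠ 0 by exact_mod_cast hε.ne')
    calc μ (Set.range f) ≤ μ (M n) + (n : ℝ≥0∞)⁻¹ := hMle n
      _ ≤ μ (⋃ n, M n) + ε := add_le_add (measure_mono (Set.subset_iUnion M n)) hn.le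
  have hnull : μ (toMeasurable μ (Set.range f) \ ⋃ n, M n) = 0 := by
    rw [measure_diff (hEsub.trans (subset_toMeasurable μ _)) hEmeas.nullMeasurableSet
        (measure_lt_top μ _).ne, measure_toMeasurable, hmuE, tsub_self]
  refine hEmeas.nullMeasurableSet.congr (MeasureTheory.ae_eq_set.mpr ⟨?_, ?_⟩)
  · simp [Set.diff_eq_empty.mpr hEsub]
  · exact measure_mono_null (Set.diff_subset_diff_left (subset_toMeasurable μ _)) hnull

/-- For a Borel-measurable map `π` between Polish spaces and a Borel set
`A`, the map `y ↦ |π⁻¹(y) ∩ A|` is universally measurable, i.e. null-measurable with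
respect to every Borel probability measure on `Y`. -/
theorem fiber_inter_card_universally_measurable
    {X Y : Type*} [TopologicalSpace X] [PolishSpace X] [MeasurableSpace X] [BorelSpace X]
    [TopologicalSpace Y] [PolishSpace Y] [MeasurableSpace Y] [BorelSpace Y]
    (π : X → Y) (hπ : Measurable π) (A : Set X) (hA : MeasurableSet A) :
    ∀ μ : Measure Y, IsProbabilityMeasure μ →
      NullMeasurable (fun y => (π ⁻¹' {y} ∩ A).encard) μ := by
  intro μ hμ
  -- The super-level sets of the fiber-cardinality function
  set S : ℕ → Set Y := fun n => {y | (n : ℕ∞) ≤ (π ⁻¹' {y} ∩ A).encard} with hS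
  -- Each `S n` is analytic, hence null-measurable
  have hSnull : ∀ n, NullMeasurableSet (S n) μ := by
    intro n
    rcases n with _ | m
    · have h0 : S 0 = Set.univ := by
        ext y; simp [hS]
      rw [h0]
      exact MeasurableSet.univ.nullMeasurableSet
    -- for n = m + 1, S n is the image of a Borel set under a measurable map
    have hanalytic : MeasureTheory.AnalyticSet (S (m + 1)) := by
      have h1 : MeasurableSet {v : Fin (m + 1) → X | Function.Injective v} := by
        have hinj : {v : Fin (m + 1) → X | Function.Injective v} =
            ⋂ (i) (j) (_ : i ≠ j), {v : Fin (m + 1) → X | v i ≠ v j} := by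
          ext v
          simp only [Set.mem_setOf_eq, Set.mem_iInter]
          constructor
          · intro h i j hij hval
            exact hij (h hval)
          · intro h a b hab
            by_contra hne
            exact h a b hne hab
        rw [hinj]
        refine MeasurableSet.iInter fun i => MeasurableSet.iInter fun j =>
          MeasurableSet.iInter fun hij => ?_
        have hrw : {v : Fin (m + 1) → X | v i ≠ v j} =
            (fun v : Fin (m + 1) → X => (v i, v j)) ⁻¹' {p : X × X | p.1 = p.2}ᶜ := rfl
        rw [hrw]
        exact ((measurable_pi_apply i).prodMk (measurable_pi_apply j))
          isClosed_diagonal.measurableSet.compl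
      have h2 : MeasurableSet {v : Fin (m + 1) → X | ∀ i, v i ∈ A ∧ π (v i) = π (v 0)} := by
        have hrw : {v : Fin (m + 1) → X | ∀ i, v i ∈ A ∧ π (v i) = π (v 0)} =
            ⋂ i, ((fun v : Fin (m + 1) → X => v i) ⁻¹' A ∩
              ((fun v : Fin (m + 1) → X => (π (v i), π (v 0))) ⁻¹' {p : Y × Y | p.1 = p.2})) := by
          ext v
          simp only [Set.mem_iInter, Set.mem_inter_iff, Set.mem_preimage, Set.mem_setOf_eq]
        rw [hrw]
        refine MeasurableSet.iInter fun i => MeasurableSet.inter ((measurable_pi_apply i) hA) ?_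
        exact ((hπ.comp (measurable_pi_apply i)).prodMk
          (hπ.comp (measurable_pi_apply 0))) isClosed_diagonal.measurableSet
      have hBmeas : MeasurableSet {v : Fin (m + 1) → X | Function.Injective v ∧
          ∀ i, v i ∈ A ∧ π (v i) = π (v 0)} := by
        rw [Set.setOf_and]
        exact h1.inter h2
      have himg : S (m + 1) = (fun v : Fin (m + 1) → X => π (v 0)) ''
          {v : Fin (m + 1) → X | Function.Injective v ∧ ∀ i, v i ∈ A ∧ π (v i) = π (v 0)} := by
        ext y
        simp only [hS, Set.mem_setOf_eq, Set.mem_image]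
        rw [le_encard_iff_exists_inj]
        constructor
        · rintro ⟨v, hvinj, hvmem⟩
          have h0 : π (v 0) = y := (hvmem 0).1
          refine ⟨v, ⟨hvinj, fun i => ⟨(hvmem i).2, ?_⟩⟩, h0⟩
          have hi : π (v i) = y := (hvmem i).1
          rw [hi, h0]
        · rintro ⟨v, ⟨hvinj, hvmem⟩, h0⟩
          refine ⟨v, hvinj, fun i => ⟨?_, (hvmem i).1⟩⟩
          show π (v i) = y
          rw [(hvmem i).2, h0]
      rw [himg]
      exact hBmeas.analyticSet_image (hπ.comp (measurable_pi_apply 0))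
    exact AnalyticSet.nullMeasurableSet_of_isFiniteMeasure hanalytic μ
  -- conclude for the function
  intro t ht
  have htc : t.Countable := Set.to_countable t
  have hdecomp : (fun y => (π ⁻¹' {y} ∩ A).encard) ⁻¹' t =
      ⋃ k ∈ t, (fun y => (π ⁻¹' {y} ∩ A).encard) ⁻¹' {k} := by
    ext y; simp
  rw [hdecomp]
  refine NullMeasurableSet.biUnion htc fun k _ => ?_
  by_cases hk : k = ⊤
  · subst hk
    have hrw : (fun y => (π ⁻¹' {y} ∩ A).encard) ⁻¹' {(⊤ : ℕ∞)} = ⋂ n : ℕ, S n := by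
      ext y
      simp only [Set.mem_preimage, Set.mem_singleton_iff, Set.mem_iInter, hS, Set.mem_setOf_eq]
      constructor
      · intro h n
        rw [h]
        exact le_top
      · intro h
        by_contra hne
        obtain ⟨m, hm⟩ : ∃ m : ℕ, (m : ℕ∞) = (π ⁻¹' {y} ∩ A).encard := ⟨_, ENat.coe_toNat hne⟩
        have h2 := h (m + 1)
        rw [← hm] at h2
        have hcon : m + 1 ≤ m := by exact_mod_cast h2
        omega
    rw [hrw]
    exact NullMeasurableSet.iInter fun n => hSnull n
  · obtain ⟨m, rfl⟩ : ∃ m : ℕ, (m : ℕ∞) = k := ⟨ENat.toNat k, ENat.coe_toNat hk⟩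
    have hrw : (fun y => (π ⁻¹' {y} ∩ A).encard) ⁻¹' {(m : ℕ∞)} = S m \ S (m + 1) := by
      ext y
      simp only [Set.mem_preimage, Set.mem_singleton_iff, Set.mem_diff, hS, Set.mem_setOf_eq]
      constructor
      · intro h
        rw [h]
        refine ⟨le_refl _, fun hc => ?_⟩
        have hcon : m + 1 ≤ m := by exact_mod_cast hc
        omega
      · rintro ⟨h1, h2⟩
        have hne : (π ⁻¹' {y} ∩ A).encard ≠ ⊤ := by
          intro htop
          exact h2 (htop ▸ le_top)
        obtain ⟨j, hj⟩ : ∃ j : ℕ, (j : ℕ∞) = (π ⁻¹' {y} ∩ A).encard := ⟨_, ENat.coe_toNat hne⟩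
        rw [← hj] at h1 h2 ⊢
        have hmj : m ≤ j := by exact_mod_cast h1
        have hjm : ¬ (m + 1 ≤ j) := fun hc => h2 (by exact_mod_cast hc)
        have hje : j = m := by omega
        exact_mod_cast congrArg (Nat.cast : ℕ → ℕ∞) hje
    rw [hrw]
    exact (hSnull m).diff (hSnull (m + 1))
end
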